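/- arXiv:2106.04023 — 11 statements merged into one kernel-verified Lean document; each statement's English description precedes it below -/
import Mathlib

section
/- Let S be a nonempty finite set, and for each s ∈ S let K^s ⊆ ℝ^n × ℝ^m be a nonempty compact set and q^s ∈ ℝ^m, let p_s ≥ 0 for each s ∈ S, and let c ∈ ℝ^n. Assume there exists x ∈ ℝ^n such that for every s ∈ S there is y^s with (x, y^s) ∈ convexHull(K^s). Then the infimum of c·x + Σ_{s∈S} p_s θ_s over all (x, (θ_s)_{s∈S}) ∈ ℝ^n × ℝ^S satisfying every Lagrangian cut, i.e. satisfying π·x + π₀ θ_s ≥ inf{π·x' + π₀ (q^s·y') : (x',y') ∈ K^s} for every s ∈ S and every (π, π₀) ∈ ℝ^n × ℝ with π₀ ≥ 0, is equal to the infimum of c·x + Σ_{s∈S} p_s (q^s·y^s) over all (x, (y^s)_{s∈S}) such that (x, y^s) ∈ convexHull(K^s) for every s ∈ S. -/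
open Set Finset Pointwise

section CompactHull

variable {E : Type*} [NormedAddCommGroup E] [NormedSpace ℝ E] [FiniteDimensional ℝ E]

/-- Convex hull of a compact set in a finite-dimensional space is compact. -/
theorem aux_isCompact_convexHull {s : Set E} (hs : IsCompact s) :
    IsCompact (convexHull ℝ s) := by
  classical
  rcases s.eq_empty_or_nonempty with rfl | ⟨a, ha⟩
  · simp
  set N := Module.finrank ℝ E + 2 with hN
  have key : convexHull ℝ s =
      (fun wz : (Fin N → ℝ) × (Fin N → E) => ∑ i, wz.1 i • wz.2 i) ''
        (stdSimplex ℝ (Fin N) ×ˢ Set.univ.pi fun _ : Fin N => s) := by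
    apply Set.Subset.antisymm
    · intro x hx
      obtain ⟨ι, hι, z, w, hzs, hind, hwpos, hwsum, hx⟩ :=
        eq_pos_convex_span_of_mem_convexHull hx
      haveI := hι
      have hwsum' : ∑ i : ι, w i = 1 := by convert hwsum
      have hx' : ∑ i : ι, w i • z i = x := by convert hx
      have hcard : Fintype.card ι ≤ N := by
        have h1 := hind.card_le_finrank_succ
        have h2 : Module.finrank ℝ (vectorSpan ℝ (Set.range z)) ≤ Module.finrank ℝ E :=
          Submodule.finrank_le _
        omega
      obtain ⟨e⟩ : Nonempty (ι ↪ Fin N) := by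
        rw [← Fintype.card_fin N] at hcard
        exact Function.Embedding.nonempty_of_card_le hcard
      set w' : Fin N → ℝ := fun j => if h : ∃ i, e i = j then w h.choose else 0 with hw'
      set z' : Fin N → E := fun j => if h : ∃ i, e i = j then z h.choose else a with hz'
      have hchoose : ∀ i : ι, (⟨i, rfl⟩ : ∃ i', e i' = e i).choose = i := by
        intro i
        exact e.injective (⟨i, rfl⟩ : ∃ i', e i' = e i).choose_spec
      have hwe : ∀ i : ι, w' (e i) = w i := by
        intro i
        simp only [hw', dif_pos (⟨i, rfl⟩ : ∃ i', e i' = e i)]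
        rw [hchoose]
      have hze : ∀ i : ι, z' (e i) = z i := by
        intro i
        simp only [hz', dif_pos (⟨i, rfl⟩ : ∃ i', e i' = e i)]
        rw [hchoose]
      have hw0 : ∀ j, (¬∃ i, e i = j) → w' j = 0 := fun j h => dif_neg h
      have hnotmem : ∀ j ∈ Finset.univ, j ∉ Finset.univ.image e → w' j = 0 := by
        intro j _ hj
        refine hw0 j fun ⟨i, hi⟩ => hj (Finset.mem_image.2 ⟨i, Finset.mem_univ _, hi⟩)
      refine ⟨(w', z'), ⟨⟨fun j => ?_, ?_⟩, fun j _ => ?_⟩, ?_⟩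
      · show 0 ≤ w' j
        by_cases h : ∃ i, e i = j
        · rw [hw']; simp only [dif_pos h]; exact (hwpos _).le
        · rw [hw0 j h]
      · show ∑ j, w' j = 1
        rw [← Finset.sum_subset (Finset.subset_univ (Finset.univ.image e))
          (fun j hj hj' => hnotmem j hj hj'),
          Finset.sum_image (fun i _ i' _ h => e.injective h)]
        rw [← hwsum']
        exact Finset.sum_congr rfl fun i _ => hwe i
      · show z' j ∈ s
        by_cases h : ∃ i, e i = j
        · rw [hz']; simp only [dif_pos h]; exact hzs ⟨_, rfl⟩
        · rw [hz']; simp only [dif_neg h]; exact ha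
      · show ∑ j, w' j • z' j = x
        rw [← Finset.sum_subset (Finset.subset_univ (Finset.univ.image e))
          (fun j hj hj' => by rw [hnotmem j hj hj', zero_smul]),
          Finset.sum_image (fun i _ i' _ h => e.injective h)]
        rw [← hx']
        exact Finset.sum_congr rfl fun i _ => by rw [hwe, hze]
    · rintro x ⟨⟨w, z⟩, ⟨⟨hw0, hw1⟩, hz⟩, rfl⟩
      exact (convex_convexHull ℝ s).sum_mem (fun i _ => hw0 i) hw1
        (fun i _ => subset_convexHull ℝ s (hz i (Set.mem_univ i)))
  rw [key]
  apply IsCompact.image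
  · exact IsCompact.prod (s := stdSimplex ℝ (Fin N)) (by apply isCompact_stdSimplex) (isCompact_univ_pi fun _ => hs)
  · exact continuous_finset_sum _ fun i _ =>
      ((continuous_apply i).comp continuous_fst).smul ((continuous_apply i).comp continuous_snd)

end CompactHull

section Lagrangian

variable {n m : ℕ}

/-- The linear functional `w ↦ π·w₁ + π₀ (q·w₂)`. -/
noncomputable def linF (π : Fin n → ℝ) (π₀ : ℝ) (qs : Fin m → ℝ) :
    ((Fin n → ℝ) × (Fin m → ℝ)) →ₗ[ℝ] ℝ where
  toFun w := (∑ i, π i * w.1 i) + π₀ * (∑ j, qs j * w.2 j)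
  map_add' a b := by
    simp only [Prod.fst_add, Prod.snd_add, Pi.add_apply, mul_add, Finset.sum_add_distrib]
    ring
  map_smul' c a := by
    simp only [Prod.smul_fst, Prod.smul_snd, Pi.smul_apply, smul_eq_mul, RingHom.id_apply]
    rw [mul_add, Finset.mul_sum, Finset.mul_sum, Finset.mul_sum, Finset.mul_sum]
    congr 1
    · exact Finset.sum_congr rfl fun i _ => by ring
    · exact Finset.sum_congr rfl fun i _ => by ring

lemma linF_apply (π : Fin n → ℝ) (π₀ : ℝ) (qs : Fin m → ℝ) (w : (Fin n → ℝ) × (Fin m → ℝ)) :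
    linF π π₀ qs w = (∑ i, π i * w.1 i) + π₀ * (∑ j, qs j * w.2 j) := rfl

/-- Easy direction: points of the convexified set satisfy every Lagrangian cut. -/
lemma aux_cut (Ks : Set ((Fin n → ℝ) × (Fin m → ℝ))) (hcpt : IsCompact Ks)
    (qs : Fin m → ℝ) {x : Fin n → ℝ} {y : Fin m → ℝ}
    (hxy : (x, y) ∈ convexHull ℝ Ks) (π : Fin n → ℝ) (π₀ : ℝ) :
    (∑ i, π i * x i) + π₀ * (∑ j, qs j * y j) ≥
      sInf {r : ℝ | ∃ w ∈ Ks, r = (∑ i, π i * w.1 i) + π₀ * (∑ j, qs j * w.2 j)} := by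
  set f := linF π π₀ qs with hf
  have hset : {r : ℝ | ∃ w ∈ Ks, r = (∑ i, π i * w.1 i) + π₀ * (∑ j, qs j * w.2 j)}
      = f '' Ks := by
    ext r
    constructor
    · rintro ⟨w, hw, rfl⟩; exact ⟨w, hw, rfl⟩
    · rintro ⟨w, hw, rfl⟩; exact ⟨w, hw, rfl⟩
  rw [hset]
  have hbdd : BddBelow (f '' Ks) := (hcpt.image f.continuous_of_finiteDimensional).bddBelow
  have hsub : convexHull ℝ Ks ⊆ f ⁻¹' (Ici (sInf (f '' Ks))) := by
    apply convexHull_min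
    · intro w hw
      exact csInf_le hbdd ⟨w, hw, rfl⟩
    · exact (convex_Ici _).linear_preimage f
  exact hsub hxy

/-- Hard direction: a point satisfying all Lagrangian cuts is dominated by a point of
the convexified set. -/
lemma aux_key (Ks : Set ((Fin n → ℝ) × (Fin m → ℝ))) (hne : Ks.Nonempty)
    (hcpt : IsCompact Ks) (qs : Fin m → ℝ) (x : Fin n → ℝ) (θ : ℝ)
    (hcut : ∀ π : Fin n → ℝ, ∀ π₀ : ℝ, 0 ≤ π₀ →
      (∑ i, π i * x i) + π₀ * θ ≥
        sInf {r : ℝ | ∃ w ∈ Ks, r = (∑ i, π i * w.1 i) + π₀ * (∑ j, qs j * w.2 j)}) :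
    ∃ y : Fin m → ℝ, (x, y) ∈ convexHull ℝ Ks ∧ (∑ j, qs j * y j) ≤ θ := by
  classical
  set φ : ((Fin n → ℝ) × (Fin m → ℝ)) →ₗ[ℝ] ((Fin n → ℝ) × ℝ) :=
    (LinearMap.fst ℝ _ _).prod ((linF (0 : Fin m → ℝ) 1 qs).comp
      ((LinearMap.snd ℝ (Fin n → ℝ) (Fin m → ℝ)).prod (LinearMap.snd ℝ _ _))) with hφdef
  have hφ : ∀ w : (Fin n → ℝ) × (Fin m → ℝ), φ w = (w.1, ∑ j, qs j * w.2 j) := by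
    intro w
    simp only [hφdef, LinearMap.prod_apply, LinearMap.coe_comp, Function.comp_apply,
      LinearMap.fst_apply, LinearMap.snd_apply, Function.prod, linF_apply]
    simp
  set C : Set ((Fin n → ℝ) × ℝ) := φ '' (convexHull ℝ Ks) with hCdef
  have hCconv : Convex ℝ C := (convex_convexHull ℝ Ks).linear_image φ
  have hCcpt : IsCompact C :=
    (aux_isCompact_convexHull hcpt).image φ.continuous_of_finiteDimensional
  set T : Set ((Fin n → ℝ) × ℝ) := {(0 : Fin n → ℝ)} ×ˢ Ici (0 : ℝ) with hTdef
  set D : Set ((Fin n → ℝ) × ℝ) := C + T with hDdef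
  have hDconv : Convex ℝ D := hCconv.add ((convex_singleton _).prod (convex_Ici _))
  have hDclosed : IsClosed D :=
    (isClosed_singleton.prod isClosed_Ici).add_left_of_isCompact hCcpt
  have hTmem : ∀ r : ℝ, 0 ≤ r → (((0 : Fin n → ℝ), r) : (Fin n → ℝ) × ℝ) ∈ T := by
    intro r hr
    exact ⟨Set.mem_singleton _, hr⟩
  have hmem : ((x, θ) : (Fin n → ℝ) × ℝ) ∈ D := by
    by_contra hxD
    obtain ⟨f, u, hfx, hfd⟩ := geometric_hahn_banach_point_closed hDconv hDclosed hxD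
    set π₀ : ℝ := f ((0 : Fin n → ℝ), (1 : ℝ)) with hπ₀
    set π : Fin n → ℝ := fun i => f ((Pi.single i 1 : Fin n → ℝ), (0 : ℝ)) with hπ
    have hfval : ∀ (v : Fin n → ℝ) (t : ℝ),
        f (v, t) = (∑ i, π i * v i) + π₀ * t := by
      intro v t
      have hsingle : ∀ i, v i • ((Pi.single i 1 : Fin n → ℝ), (0 : ℝ))
          = ((Pi.single i (v i) : Fin n → ℝ), (0 : ℝ)) := by
        intro i
        rw [Prod.ext_iff]
        constructor
        · show v i • (Pi.single i 1 : Fin n → ℝ) = Pi.single i (v i)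
          funext j
          simp [Pi.single_apply, mul_comm]
        · show v i • (0 : ℝ) = 0
          simp
      have h1 : ((v, t) : (Fin n → ℝ) × ℝ)
          = (∑ i, v i • ((Pi.single i 1 : Fin n → ℝ), (0 : ℝ)))
            + t • ((0 : Fin n → ℝ), (1 : ℝ)) := by
        rw [Prod.ext_iff]
        constructor
        · simp only [Prod.fst_add, Prod.fst_sum, Prod.smul_fst, hsingle, smul_zero]
          rw [Finset.univ_sum_single v]
          simp
        · simp only [Prod.snd_add, Prod.snd_sum, Prod.smul_snd, hsingle, smul_eq_mul,
            Finset.sum_const_zero, mul_one, zero_add]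
      rw [h1, map_add, map_sum, map_smul]
      simp only [map_smul, smul_eq_mul]
      rw [mul_comm t]
      congr 1
      refine Finset.sum_congr rfl fun i _ => ?_
      simp only [hπ]
      ring
    have hCsub : C ⊆ D := by
      intro z hz
      have := Set.add_mem_add hz (hTmem 0 le_rfl)
      have h0 : (((0 : Fin n → ℝ), (0 : ℝ)) : (Fin n → ℝ) × ℝ) = 0 := rfl
      rw [h0, add_zero] at this
      exact this
    obtain ⟨w₀, hw₀⟩ := hne
    have hz₀ : φ w₀ ∈ C := ⟨w₀, subset_convexHull ℝ Ks hw₀, rfl⟩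
    have hπ₀nonneg : 0 ≤ π₀ := by
      by_contra hneg
      push_neg at hneg
      have hfz₀ : u < f (φ w₀) := hfd _ (hCsub hz₀)
      set r : ℝ := (u - f (φ w₀)) / π₀ with hr
      have hrpos : 0 < r := div_pos_of_neg_of_neg (by linarith) hneg
      have hmemD : φ w₀ + ((0 : Fin n → ℝ), r) ∈ D :=
        Set.add_mem_add hz₀ (hTmem r hrpos.le)
      have hgt := hfd _ hmemD
      rw [map_add] at hgt
      have hf0r : f ((0 : Fin n → ℝ), r) = π₀ * r := by
        rw [hfval]
        simp
      rw [hf0r, hr, mul_div_cancel₀ _ (ne_of_lt hneg)] at hgt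
      linarith
    have hcut' := hcut π π₀ hπ₀nonneg
    have hlow : u ≤ sInf {r : ℝ | ∃ w ∈ Ks,
        r = (∑ i, π i * w.1 i) + π₀ * (∑ j, qs j * w.2 j)} := by
      refine le_csInf ⟨_, ⟨w₀, hw₀, rfl⟩⟩ ?_
      rintro r ⟨w, hw, rfl⟩
      have hwC : φ w ∈ C := ⟨w, subset_convexHull ℝ Ks hw, rfl⟩
      have hgt := hfd _ (hCsub hwC)
      rw [hφ w, hfval] at hgt
      exact hgt.le
    rw [hfval] at hfx
    linarith
  rw [hDdef, Set.mem_add] at hmem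
  obtain ⟨z, hzC, t, htT, hsum⟩ := hmem
  obtain ⟨a, haK, rfl⟩ := hzC
  obtain ⟨ht1, ht2⟩ := htT
  have ht1' : t.1 = 0 := ht1
  have ht2' : (0 : ℝ) ≤ t.2 := ht2
  rw [hφ a] at hsum
  have hx1 : a.1 = x := by
    have h := congrArg Prod.fst hsum
    simp only [Prod.fst_add] at h
    rw [ht1'] at h
    simpa using h
  have hθ : (∑ j, qs j * a.2 j) + t.2 = θ := by
    have h := congrArg Prod.snd hsum
    simpa using h
  refine ⟨a.2, ?_, ?_⟩
  · have ha2 : ((x, a.2) : (Fin n → ℝ) × (Fin m → ℝ)) = a := by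
      rw [← hx1]
    rw [ha2]
    exact haK
  · linarith

end Lagrangian

/-- Theorem 3.2 combined with the primal characterization of the Lagrangian dual bound:
the Benders relaxation with all Lagrangian cuts has value equal to the convexified primal. -/
theorem stmt_0 {n m : ℕ} {S : Type*} [Fintype S] [Nonempty S]
    (K : S → Set ((Fin n → ℝ) × (Fin m → ℝ)))
    (hKne : ∀ s, (K s).Nonempty) (hKcpt : ∀ s, IsCompact (K s))
    (q : S → Fin m → ℝ) (p : S → ℝ) (hp : ∀ s, 0 ≤ p s) (c : Fin n → ℝ)
    (hfeas : ∃ x : Fin n → ℝ, ∀ s, ∃ y : Fin m → ℝ, (x, y) ∈ convexHull ℝ (K s)) :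
    sInf {v : ℝ | ∃ (x : Fin n → ℝ) (θ : S → ℝ),
      (∀ s, ∀ π : Fin n → ℝ, ∀ π₀ : ℝ, 0 ≤ π₀ →
        (∑ i, π i * x i) + π₀ * θ s ≥
          sInf {r : ℝ | ∃ w ∈ K s, r = (∑ i, π i * w.1 i) + π₀ * (∑ j, q s j * w.2 j)}) ∧
      v = (∑ i, c i * x i) + ∑ s, p s * θ s} =
    sInf {v : ℝ | ∃ (x : Fin n → ℝ) (y : S → Fin m → ℝ),
      (∀ s, (x, y s) ∈ convexHull ℝ (K s)) ∧
      v = (∑ i, c i * x i) + ∑ s, p s * (∑ j, q s j * y s j)} := by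
  classical
  set A : Set ℝ := {v : ℝ | ∃ (x : Fin n → ℝ) (θ : S → ℝ),
      (∀ s, ∀ π : Fin n → ℝ, ∀ π₀ : ℝ, 0 ≤ π₀ →
        (∑ i, π i * x i) + π₀ * θ s ≥
          sInf {r : ℝ | ∃ w ∈ K s, r = (∑ i, π i * w.1 i) + π₀ * (∑ j, q s j * w.2 j)}) ∧
      v = (∑ i, c i * x i) + ∑ s, p s * θ s} with hA
  set B : Set ℝ := {v : ℝ | ∃ (x : Fin n → ℝ) (y : S → Fin m → ℝ),
      (∀ s, (x, y s) ∈ convexHull ℝ (K s)) ∧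
      v = (∑ i, c i * x i) + ∑ s, p s * (∑ j, q s j * y s j)} with hB
  have hBA : B ⊆ A := by
    rintro v ⟨x, y, hxy, rfl⟩
    refine ⟨x, fun s => ∑ j, q s j * y s j, fun s π π₀ _ => ?_, rfl⟩
    exact aux_cut (K s) (hKcpt s) (q s) (hxy s) π π₀
  have hBne : B.Nonempty := by
    obtain ⟨x₀, hx₀⟩ := hfeas
    exact ⟨_, x₀, fun s => (hx₀ s).choose, fun s => (hx₀ s).choose_spec, rfl⟩
  have hAne : A.Nonempty := hBne.mono hBA
  have hkey : ∀ v ∈ A, ∃ w ∈ B, w ≤ v := by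
    rintro v ⟨x, θ, hcuts, rfl⟩
    have hy : ∀ s, ∃ y : Fin m → ℝ, (x, y) ∈ convexHull ℝ (K s) ∧ (∑ j, q s j * y j) ≤ θ s :=
      fun s => aux_key (K s) (hKne s) (hKcpt s) (q s) x (θ s) (hcuts s)
    choose y hy1 hy2 using hy
    refine ⟨_, ⟨x, y, hy1, rfl⟩, ?_⟩
    apply add_le_add le_rfl
    exact Finset.sum_le_sum fun s _ => mul_le_mul_of_nonneg_left (hy2 s) (hp s)
  by_cases hBbdd : BddBelow B
  · apply le_antisymm
    · refine csInf_le_csInf ?_ hBne hBA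
      obtain ⟨b, hb⟩ := hBbdd
      refine ⟨b, fun v hv => ?_⟩
      obtain ⟨w, hwB, hwv⟩ := hkey v hv
      exact (hb hwB).trans hwv
    · refine le_csInf hAne fun v hv => ?_
      obtain ⟨w, hwB, hwv⟩ := hkey v hv
      exact (csInf_le hBbdd hwB).trans hwv
  · have hAbdd : ¬BddBelow A := fun h => hBbdd (h.mono hBA)
    rw [Real.sInf_of_not_bddBelow hAbdd, Real.sInf_of_not_bddBelow hBbdd]
end

section
/- Let K ⊆ ℝ^n × ℝ^m be nonempty and compact and q ∈ ℝ^m, and define Q̄*(π,π₀) = inf{π·x + π₀ (q·y) : (x,y) ∈ K} for (π,π₀) ∈ ℝ^n × ℝ. Let Π ⊆ ℝ^n × ℝ be a neighborhood of the origin, and let Π* = Π ∩ (ℝ^n × ℝ≥0). Then the set {(x,θ) ∈ ℝ^n × ℝ : π·x + π₀θ ≥ Q̄*(π,π₀) for all (π,π₀) ∈ Π*} is equal to the set {(x,θ) ∈ ℝ^n × ℝ : π·x + π₀θ ≥ Q̄*(π,π₀) for all (π,π₀) ∈ ℝ^n × ℝ with π₀ ≥ 0}. -/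
open Pointwise


/-- Proposition 3.1 in cut-family form: restricting Lagrangian cut coefficients to any
neighborhood of the origin (intersected with {π₀ ≥ 0}) defines the same relaxation
as allowing all coefficients. -/
theorem stmt_1 {n m : ℕ} (K : Set ((Fin n → ℝ) × (Fin m → ℝ)))
    (hKne : K.Nonempty) (hKcpt : IsCompact K) (q : Fin m → ℝ)
    (Pset : Set ((Fin n → ℝ) × ℝ)) (hP : Pset ∈ nhds (0 : (Fin n → ℝ) × ℝ)) :
    {xt : (Fin n → ℝ) × ℝ | ∀ π ∈ Pset ∩ {z : (Fin n → ℝ) × ℝ | 0 ≤ z.2},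
        (∑ i, π.1 i * xt.1 i) + π.2 * xt.2 ≥
          sInf {r : ℝ | ∃ w ∈ K, r = (∑ i, π.1 i * w.1 i) + π.2 * (∑ j, q j * w.2 j)}} =
    {xt : (Fin n → ℝ) × ℝ | ∀ (π : Fin n → ℝ) (π₀ : ℝ), 0 ≤ π₀ →
        (∑ i, π i * xt.1 i) + π₀ * xt.2 ≥
          sInf {r : ℝ | ∃ w ∈ K, r = (∑ i, π i * w.1 i) + π₀ * (∑ j, q j * w.2 j)}} := by
  ext xt
  simp only [Set.mem_setOf_eq]
  constructor
  · intro h π π₀ hπ₀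
    obtain ⟨ε, hε, hball⟩ := Metric.mem_nhds_iff.1 hP
    set v : (Fin n → ℝ) × ℝ := (π, π₀) with hv
    have hnorm : (0:ℝ) < ‖v‖ + 1 := by positivity
    set c : ℝ := ε / (2 * (‖v‖ + 1)) with hc
    have hcpos : 0 < c := by positivity
    have hcv : c • v ∈ Pset := by
      apply hball
      simp only [Metric.mem_ball, dist_zero_right, norm_smul, Real.norm_eq_abs,
        abs_of_pos hcpos]
      calc c * ‖v‖ ≤ c * (‖v‖ + 1) := by
            apply mul_le_mul_of_nonneg_left (by linarith) hcpos.le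
        _ = ε / 2 := by rw [hc]; field_simp
        _ < ε := by linarith
    have hmem : c • v ∈ Pset ∩ {z : (Fin n → ℝ) × ℝ | 0 ≤ z.2} := by
      refine ⟨hcv, ?_⟩
      have : (c • v).2 = c * π₀ := rfl
      simp only [Set.mem_setOf_eq, this]
      positivity
    have key := h (c • v) hmem
    have h1 : (c • v).1 = c • π := rfl
    have h2 : (c • v).2 = c * π₀ := rfl
    rw [h1, h2] at key
    have hsets : {r : ℝ | ∃ w ∈ K, r = (∑ i, (c • π) i * w.1 i) + (c * π₀) * (∑ j, q j * w.2 j)}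
        = c • {r : ℝ | ∃ w ∈ K, r = (∑ i, π i * w.1 i) + π₀ * (∑ j, q j * w.2 j)} := by
      ext r
      simp only [Set.mem_smul_set, Set.mem_setOf_eq]
      constructor
      · rintro ⟨w, hw, rfl⟩
        refine ⟨(∑ i, π i * w.1 i) + π₀ * (∑ j, q j * w.2 j), ⟨w, hw, rfl⟩, ?_⟩
        simp only [smul_eq_mul, Pi.smul_apply]
        rw [mul_add, Finset.mul_sum]
        ring_nf
      · rintro ⟨s, ⟨w, hw, rfl⟩, rfl⟩
        refine ⟨w, hw, ?_⟩
        simp only [smul_eq_mul, Pi.smul_apply]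
        rw [mul_add, Finset.mul_sum]
        ring_nf
    rw [hsets, Real.sInf_smul_of_nonneg hcpos.le] at key
    have hlhs : (∑ i, (c • π) i * xt.1 i) + (c * π₀) * xt.2
        = c * ((∑ i, π i * xt.1 i) + π₀ * xt.2) := by
      simp only [Pi.smul_apply, smul_eq_mul]
      rw [mul_add, Finset.mul_sum]
      ring_nf
    rw [hlhs] at key
    simp only [smul_eq_mul] at key
    exact le_of_mul_le_mul_left key hcpos
  · intro h π hπ
    exact h π.1 π.2 hπ.2
end

section
/- Let K ⊆ ℝ^n × ℝ^m be nonempty and compact, q ∈ ℝ^m, and (x,θ) ∈ ℝ^n × ℝ. Then the following are equivalent: (i) for every λ ∈ ℝ^n and every (x̄,ȳ) ∈ K that minimizes (x',y') ↦ λ·x' + q·y' over K, the Lagrangian optimality cut λ·(x − x̄) + θ ≥ q·ȳ holds; (ii) for every π ∈ ℝ^n and every π₀ > 0, π·x + π₀θ ≥ inf{π·x' + π₀ (q·y') : (x',y') ∈ K}. -/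
/-- Part of Proposition 3.1: Lagrangian optimality cuts are equivalent to
Lagrangian cuts with strictly positive coefficient π₀ on θ. -/
theorem stmt_2 {n m : ℕ} (K : Set ((Fin n → ℝ) × (Fin m → ℝ)))
    (hKne : K.Nonempty) (hKcpt : IsCompact K) (q : Fin m → ℝ)
    (x : Fin n → ℝ) (θ : ℝ) :
    (∀ lam : Fin n → ℝ, ∀ xb ∈ K,
        (∀ w ∈ K, (∑ i, lam i * xb.1 i) + (∑ j, q j * xb.2 j) ≤
            (∑ i, lam i * w.1 i) + (∑ j, q j * w.2 j)) →
        (∑ i, lam i * (x i - xb.1 i)) + θ ≥ ∑ j, q j * xb.2 j) ↔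
    (∀ (π : Fin n → ℝ) (π₀ : ℝ), 0 < π₀ →
        (∑ i, π i * x i) + π₀ * θ ≥
          sInf {r : ℝ | ∃ w ∈ K, r = (∑ i, π i * w.1 i) + π₀ * (∑ j, q j * w.2 j)}) := by
  constructor
  · intro h π π₀ hπ₀
    set lam : Fin n → ℝ := fun i => π i / π₀ with hlam
    have hcont : ContinuousOn
        (fun w : (Fin n → ℝ) × (Fin m → ℝ) =>
          (∑ i, π i * w.1 i) + π₀ * (∑ j, q j * w.2 j)) K := by
      apply Continuous.continuousOn
      exact (continuous_finset_sum _ (fun i _ =>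
        (continuous_const.mul ((continuous_apply i).comp continuous_fst)))).add
        (continuous_const.mul (continuous_finset_sum _ (fun j _ =>
          continuous_const.mul ((continuous_apply j).comp continuous_snd))))
    obtain ⟨xb, hxbK, hxbmin⟩ := hKcpt.exists_isMinOn hKne hcont
    have hs : ∀ z1 : Fin n → ℝ, ∑ i, lam i * z1 i = (∑ i, π i * z1 i) / π₀ := by
      intro z1
      rw [Finset.sum_div]
      exact Finset.sum_congr rfl fun i _ => by rw [hlam]; ring
    have hmin : ∀ w ∈ K, (∑ i, lam i * xb.1 i) + (∑ j, q j * xb.2 j) ≤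
        (∑ i, lam i * w.1 i) + (∑ j, q j * w.2 j) := by
      intro w hw
      have h2 : (∑ i, π i * xb.1 i) + π₀ * (∑ j, q j * xb.2 j) ≤
          (∑ i, π i * w.1 i) + π₀ * (∑ j, q j * w.2 j) := hxbmin hw
      rw [hs xb.1, hs w.1, ← mul_le_mul_iff_right₀ hπ₀, mul_add, mul_add,
        mul_div_cancel₀ _ hπ₀.ne', mul_div_cancel₀ _ hπ₀.ne']
      linarith
    have hcut := h lam xb hxbK hmin
    have hInf : sInf {r : ℝ | ∃ w ∈ K, r = (∑ i, π i * w.1 i) + π₀ * (∑ j, q j * w.2 j)}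
        ≤ (∑ i, π i * xb.1 i) + π₀ * (∑ j, q j * xb.2 j) := by
      apply csInf_le
      · refine ⟨(∑ i, π i * xb.1 i) + π₀ * (∑ j, q j * xb.2 j), ?_⟩
        rintro r ⟨w, hw, rfl⟩
        exact hxbmin hw
      · exact ⟨xb, hxbK, rfl⟩
    have hmain : (∑ i, π i * x i) + π₀ * θ ≥
        (∑ i, π i * xb.1 i) + π₀ * (∑ j, q j * xb.2 j) := by
      have := mul_le_mul_of_nonneg_left hcut (le_of_lt hπ₀)
      -- hcut : ∑ lam i * (x i - xb.1 i) + θ ≥ ∑ q j * xb.2 j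
      have expand : π₀ * ((∑ i, lam i * (x i - xb.1 i)) + θ)
          = (∑ i, π i * x i) - (∑ i, π i * xb.1 i) + π₀ * θ := by
        rw [hlam, mul_add, Finset.mul_sum, ← Finset.sum_sub_distrib]
        congr 1
        apply Finset.sum_congr rfl
        intro i _
        field_simp
      nlinarith [this]
    linarith [hInf, hmain]
  · intro h lam xb hxbK hmin
    have h1 := h lam 1 one_pos
    have hInfge : sInf {r : ℝ | ∃ w ∈ K, r = (∑ i, lam i * w.1 i) + 1 * (∑ j, q j * w.2 j)}
        ≥ (∑ i, lam i * xb.1 i) + (∑ j, q j * xb.2 j) := by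
      apply le_csInf
      · exact Set.nonempty_of_mem (show _ ∈ {r : ℝ | ∃ w ∈ K,
          r = (∑ i, lam i * w.1 i) + 1 * (∑ j, q j * w.2 j)} from ⟨xb, hxbK, rfl⟩)
      rintro r ⟨w, hw, rfl⟩
      rw [one_mul]
      exact hmin w hw
    have hexp : (∑ i, lam i * (x i - xb.1 i)) = (∑ i, lam i * x i) - (∑ i, lam i * xb.1 i) := by
      rw [← Finset.sum_sub_distrib]
      exact Finset.sum_congr rfl (fun i _ => by ring)
    rw [ge_iff_le, hexp]
    have := le_trans hInfge h1
    linarith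
end

section
/- Let K ⊆ ℝ^n × ℝ^m be nonempty and bounded, q ∈ ℝ^m, and (x,θ) ∈ ℝ^n × ℝ. If π·x + π₀θ ≥ inf{π·x' + π₀ (q·y') : (x',y') ∈ K} for every π ∈ ℝ^n and every π₀ > 0, then π·x ≥ inf{π·x' : (x',y') ∈ K} for every π ∈ ℝ^n. -/
/-- Cuts with π₀ = 0 are implied by cuts with π₀ > 0 when K is bounded
(lower semicontinuity of the value function at π₀ = 0). -/
theorem stmt_3 {n m : ℕ} (K : Set ((Fin n → ℝ) × (Fin m → ℝ)))
    (hKne : K.Nonempty) (hKbd : Bornology.IsBounded K) (q : Fin m → ℝ)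
    (x : Fin n → ℝ) (θ : ℝ)
    (h : ∀ (π : Fin n → ℝ) (π₀ : ℝ), 0 < π₀ →
        (∑ i, π i * x i) + π₀ * θ ≥
          sInf {r : ℝ | ∃ w ∈ K, r = (∑ i, π i * w.1 i) + π₀ * (∑ j, q j * w.2 j)}) :
    ∀ π : Fin n → ℝ,
      (∑ i, π i * x i) ≥ sInf {r : ℝ | ∃ w ∈ K, r = ∑ i, π i * w.1 i} := by
  intro π
  obtain ⟨C, hC0, hC⟩ : ∃ C, 0 ≤ C ∧ ∀ w ∈ K, ‖w‖ ≤ C := by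
    obtain ⟨C, hC⟩ := hKbd.exists_norm_le
    exact ⟨max C 0, le_max_right _ _, fun w hw => (hC w hw).trans (le_max_left _ _)⟩
  set A := ∑ i, |π i| * C with hAdef
  set M := ∑ j, |q j| * C with hMdef
  have hA : 0 ≤ A := Finset.sum_nonneg fun i _ => mul_nonneg (abs_nonneg _) hC0
  have hM : 0 ≤ M := Finset.sum_nonneg fun j _ => mul_nonneg (abs_nonneg _) hC0
  have hbound1 : ∀ w ∈ K, |∑ i, π i * w.1 i| ≤ A := by
    intro w hw
    calc |∑ i, π i * w.1 i| ≤ ∑ i, |π i * w.1 i| := Finset.abs_sum_le_sum_abs _ _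
      _ ≤ A := Finset.sum_le_sum fun i _ => by
          rw [abs_mul]
          exact mul_le_mul_of_nonneg_left
            ((norm_le_pi_norm w.1 i).trans ((norm_fst_le w).trans (hC w hw)))
            (abs_nonneg _)
  have hbound2 : ∀ w ∈ K, |∑ j, q j * w.2 j| ≤ M := by
    intro w hw
    calc |∑ j, q j * w.2 j| ≤ ∑ j, |q j * w.2 j| := Finset.abs_sum_le_sum_abs _ _
      _ ≤ M := Finset.sum_le_sum fun j _ => by
          rw [abs_mul]
          exact mul_le_mul_of_nonneg_left
            ((norm_le_pi_norm w.2 j).trans ((norm_snd_le w).trans (hC w hw)))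
            (abs_nonneg _)
  set S := {r : ℝ | ∃ w ∈ K, r = ∑ i, π i * w.1 i} with hSdef
  obtain ⟨w₀, hw₀⟩ := hKne
  have hSne : S.Nonempty := ⟨_, w₀, hw₀, rfl⟩
  have hSbd : BddBelow S := ⟨-A, fun r hr => by
    obtain ⟨w, hw, rfl⟩ := hr
    exact neg_le_of_abs_le (hbound1 w hw)⟩
  rw [ge_iff_le]
  apply le_of_forall_pos_le_add
  intro ε hε
  set π₀ := ε / (M + |θ| + 1) with hπ₀def
  have hden : 0 < M + |θ| + 1 := by positivity
  have hπ₀ : 0 < π₀ := div_pos hε hden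
  have hT := h π π₀ hπ₀
  have hTlb : sInf S - π₀ * M ≤
      sInf {r : ℝ | ∃ w ∈ K, r = (∑ i, π i * w.1 i) + π₀ * (∑ j, q j * w.2 j)} := by
    have hTne : {r : ℝ | ∃ w ∈ K, r = (∑ i, π i * w.1 i) + π₀ * (∑ j, q j * w.2 j)}.Nonempty :=
      ⟨_, w₀, hw₀, rfl⟩
    apply le_csInf hTne
    rintro r ⟨w, hw, rfl⟩
    have h1 : sInf S ≤ ∑ i, π i * w.1 i := csInf_le hSbd ⟨w, hw, rfl⟩
    have h2 : -M ≤ ∑ j, q j * w.2 j := neg_le_of_abs_le (hbound2 w hw)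
    nlinarith [hπ₀.le]
  have key : sInf S ≤ (∑ i, π i * x i) + π₀ * θ + π₀ * M := by linarith
  have hπ₀small : π₀ * θ + π₀ * M ≤ ε := by
    have h1 : π₀ * θ + π₀ * M ≤ π₀ * (|θ| + M) := by
      nlinarith [le_abs_self θ, hπ₀.le]
    have h2 : π₀ * (|θ| + M) ≤ ε := by
      rw [hπ₀def, div_mul_eq_mul_div, div_le_iff₀ hden]
      nlinarith [abs_nonneg θ]
    linarith
  linarith
end

section
/- Let Π ⊆ ℝ^n × ℝ be nonempty and compact, let E ⊆ ℝ^n × ℝ be nonempty and bounded, and define f(p) = inf{p·e : e ∈ E} for p ∈ ℝ^n × ℝ. Let δ ∈ [0,1), let w : ℕ → ℝ^n × ℝ be a sequence, and let π : ℕ → ℝ^n × ℝ be a sequence with π_t ∈ Π for all t, such that: (i) for every t, f(π_t) − π_t·w_t ≥ (1−δ) · sup{f(p) − p·w_t : p ∈ Π}; and (ii) for every t < t', f(π_t) − π_t·w_{t'} ≤ 0. Then every cluster point w̄ of the sequence (w_t) satisfies f(p) − p·w̄ ≤ 0 for all p ∈ Π, i.e. w̄ satisfies all Lagrangian cuts with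 coefficients in Π. -/
/-- The bilinear pairing used in the cuts. -/
def Bform {n : ℕ} (p v : (Fin n → ℝ) × ℝ) : ℝ :=
  (∑ i, p.1 i * v.1 i) + p.2 * v.2

/-- The "ℓ¹-type" size of a coefficient vector. -/
def cSize {n : ℕ} (p : (Fin n → ℝ) × ℝ) : ℝ :=
  (∑ i, |p.1 i|) + |p.2|

lemma cSize_nonneg {n : ℕ} (p : (Fin n → ℝ) × ℝ) : 0 ≤ cSize p := by
  have : (0:ℝ) ≤ ∑ i, |p.1 i| := Finset.sum_nonneg fun i _ => abs_nonneg _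
  have := abs_nonneg p.2
  unfold cSize; linarith

lemma cSize_continuous {n : ℕ} : Continuous (cSize (n := n)) := by
  unfold cSize
  fun_prop

lemma Bform_sub {n : ℕ} (p v v' : (Fin n → ℝ) × ℝ) :
    Bform p v - Bform p v' = Bform p (v - v') := by
  unfold Bform
  simp only [Prod.fst_sub, Prod.snd_sub, Pi.sub_apply, mul_sub, Finset.sum_sub_distrib]
  ring

lemma Bform_abs_le {n : ℕ} (p v : (Fin n → ℝ) × ℝ) :
    |Bform p v| ≤ cSize p * ‖v‖ := by
  have h1 : ∀ i, |p.1 i * v.1 i| ≤ |p.1 i| * ‖v‖ := by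
    intro i
    rw [abs_mul]
    refine mul_le_mul_of_nonneg_left ?_ (abs_nonneg _)
    calc |v.1 i| = ‖v.1 i‖ := (Real.norm_eq_abs _).symm
      _ ≤ ‖v.1‖ := norm_le_pi_norm v.1 i
      _ ≤ ‖v‖ := norm_fst_le v
  have h2 : |p.2 * v.2| ≤ |p.2| * ‖v‖ := by
    rw [abs_mul]
    refine mul_le_mul_of_nonneg_left ?_ (abs_nonneg _)
    calc |v.2| = ‖v.2‖ := (Real.norm_eq_abs _).symm
      _ ≤ ‖v‖ := norm_snd_le v
  calc |(∑ i, p.1 i * v.1 i) + p.2 * v.2|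
      ≤ |∑ i, p.1 i * v.1 i| + |p.2 * v.2| := abs_add_le _ _
    _ ≤ (∑ i, |p.1 i * v.1 i|) + |p.2 * v.2| :=
        add_le_add (Finset.abs_sum_le_sum_abs _ _) le_rfl
    _ ≤ (∑ i, |p.1 i| * ‖v‖) + |p.2| * ‖v‖ :=
        add_le_add (Finset.sum_le_sum fun i _ => h1 i) h2
    _ = cSize p * ‖v‖ := by
        simp [cSize, add_mul, Finset.sum_mul]

/-- Theorem 4.2: convergence of the restricted Lagrangian cut generation scheme:
every cluster point of the iterates satisfies all cuts with coefficients in Π. -/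
theorem stmt_5 {n : ℕ} (Pset : Set ((Fin n → ℝ) × ℝ)) (hPne : Pset.Nonempty)
    (hPcpt : IsCompact Pset)
    (E : Set ((Fin n → ℝ) × ℝ)) (hEne : E.Nonempty) (hEbd : Bornology.IsBounded E)
    (f : (Fin n → ℝ) × ℝ → ℝ)
    (hf : ∀ p, f p = sInf {r : ℝ | ∃ e ∈ E, r = (∑ i, p.1 i * e.1 i) + p.2 * e.2})
    (δ : ℝ) (hδ0 : 0 ≤ δ) (hδ1 : δ < 1)
    (w : ℕ → (Fin n → ℝ) × ℝ) (π : ℕ → (Fin n → ℝ) × ℝ) (hπ : ∀ t, π t ∈ Pset)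
    (h1 : ∀ t, f (π t) - ((∑ i, (π t).1 i * (w t).1 i) + (π t).2 * (w t).2) ≥
        (1 - δ) *
          sSup {v : ℝ | ∃ p ∈ Pset, v = f p - ((∑ i, p.1 i * (w t).1 i) + p.2 * (w t).2)})
    (h2 : ∀ t t', t < t' →
        f (π t) - ((∑ i, (π t).1 i * (w t').1 i) + (π t).2 * (w t').2) ≤ 0)
    (wbar : (Fin n → ℝ) × ℝ) (hcluster : MapClusterPt wbar Filter.atTop w) :
    ∀ p ∈ Pset, f p - ((∑ i, p.1 i * wbar.1 i) + p.2 * wbar.2) ≤ 0 := by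
  -- restate hypotheses in terms of Bform (definitional)
  have h1' : ∀ t, f (π t) - Bform (π t) (w t) ≥
      (1 - δ) * sSup {v : ℝ | ∃ p ∈ Pset, v = f p - Bform p (w t)} := h1
  have h2' : ∀ t t', t < t' → f (π t) - Bform (π t) (w t') ≤ 0 := h2
  intro pb hpb
  by_contra hpos
  push_neg at hpos
  set ε : ℝ := f pb - Bform pb wbar with hε_def
  have hε : 0 < ε := hpos
  -- bound on E
  obtain ⟨e₀, he₀⟩ := hEne
  obtain ⟨M, hM⟩ := isBounded_iff_forall_norm_le.mp hEbd
  -- bound on Pset coefficients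
  obtain ⟨p₀, hp₀⟩ := hPne
  obtain ⟨C, hCmem⟩ := (hPcpt.image cSize_continuous).bddAbove
  have hC : ∀ p ∈ Pset, cSize p ≤ C := fun p hp => hCmem ⟨p, hp, rfl⟩
  have hC0 : 0 ≤ C := le_trans (cSize_nonneg p₀) (hC p₀ hp₀)
  -- f p ≤ Bform p e₀ for every p
  have hfle : ∀ p, f p ≤ Bform p e₀ := by
    intro p
    rw [hf p]
    have hbdd : BddBelow {r : ℝ | ∃ e ∈ E, r = (∑ i, p.1 i * e.1 i) + p.2 * e.2} := by
      refine ⟨-(cSize p * M), ?_⟩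
      rintro r ⟨e, he, rfl⟩
      have h3 : |Bform p e| ≤ cSize p * ‖e‖ := Bform_abs_le p e
      have h4 : cSize p * ‖e‖ ≤ cSize p * M :=
        mul_le_mul_of_nonneg_left (hM e he) (cSize_nonneg p)
      have h5 : -(cSize p * M) ≤ Bform p e := by
        have := neg_abs_le (Bform p e); linarith
      exact h5
    exact csInf_le hbdd ⟨e₀, he₀, rfl⟩
  -- each cut-violation set is bounded above
  have hVbdd : ∀ t, BddAbove {v : ℝ | ∃ p ∈ Pset, v = f p - Bform p (w t)} := by
    intro t
    refine ⟨C * ‖e₀ - w t‖, ?_⟩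
    rintro v ⟨p, hp, rfl⟩
    have h3 : f p - Bform p (w t) ≤ Bform p e₀ - Bform p (w t) := by
      have := hfle p; linarith
    rw [Bform_sub] at h3
    calc f p - Bform p (w t) ≤ Bform p (e₀ - w t) := h3
      _ ≤ |Bform p (e₀ - w t)| := le_abs_self _
      _ ≤ cSize p * ‖e₀ - w t‖ := Bform_abs_le _ _
      _ ≤ C * ‖e₀ - w t‖ := mul_le_mul_of_nonneg_right (hC p hp) (norm_nonneg _)
  -- radius
  set r : ℝ := (1 - δ) * ε / (4 * (C + 1)) with hr_def
  have hr0 : 0 < r := by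
    apply div_pos (mul_pos (by linarith) hε) (by linarith)
  have hCr : C * r ≤ (1 - δ) * ε / 4 := by
    rw [hr_def, mul_div_assoc']
    rw [div_le_div_iff₀ (by linarith) (by norm_num)]
    nlinarith [mul_nonneg (mul_nonneg (sub_nonneg.mpr hδ1.le) hε.le) hC0]
  -- two nearby iterates
  have hfreq : ∃ᶠ t in Filter.atTop, w t ∈ Metric.ball wbar r :=
    (mapClusterPt_iff_frequently.mp hcluster) _ (Metric.ball_mem_nhds _ hr0)
  obtain ⟨t, -, ht⟩ := Filter.frequently_atTop.mp hfreq 0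
  obtain ⟨t', ht'ge, ht'⟩ := Filter.frequently_atTop.mp hfreq (t + 1)
  have htt' : t < t' := Nat.lt_of_succ_le ht'ge
  have hwt : ‖w t - wbar‖ < r := by rwa [← dist_eq_norm]
  have hwt' : ‖w t' - wbar‖ < r := by rwa [← dist_eq_norm]
  -- lower bound on the max violation at time t
  have hA : ε - C * r ≤ f pb - Bform pb (w t) := by
    have heq : f pb - Bform pb (w t) = ε + Bform pb (wbar - w t) := by
      rw [← Bform_sub, hε_def]; ring
    have hnrm : ‖wbar - w t‖ < r := by rwa [norm_sub_rev]
    have habs : |Bform pb (wbar - w t)| ≤ C * r := by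
      calc |Bform pb (wbar - w t)| ≤ cSize pb * ‖wbar - w t‖ := Bform_abs_le _ _
        _ ≤ C * r := mul_le_mul (hC pb hpb) hnrm.le (norm_nonneg _) hC0
    have := neg_abs_le (Bform pb (wbar - w t))
    linarith
  have hB : f pb - Bform pb (w t) ≤
      sSup {v : ℝ | ∃ p ∈ Pset, v = f p - Bform p (w t)} :=
    le_csSup (hVbdd t) ⟨pb, hpb, rfl⟩
  have hCineq : (1 - δ) * (ε - C * r) ≤ f (π t) - Bform (π t) (w t) := by
    calc (1 - δ) * (ε - C * r)
        ≤ (1 - δ) * sSup {v : ℝ | ∃ p ∈ Pset, v = f p - Bform p (w t)} := by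
          apply mul_le_mul_of_nonneg_left (le_trans hA hB) (by linarith)
      _ ≤ f (π t) - Bform (π t) (w t) := h1' t
  -- upper bound using the later iterate
  have hD : f (π t) - Bform (π t) (w t) ≤ 2 * (C * r) := by
    have hcut : f (π t) - Bform (π t) (w t') ≤ 0 := h2' t t' htt'
    have heq : f (π t) - Bform (π t) (w t) =
        (f (π t) - Bform (π t) (w t')) + Bform (π t) (w t' - w t) := by
      rw [← Bform_sub]; ring
    have hnorm : ‖w t' - w t‖ ≤ 2 * r := by
      calc ‖w t' - w t‖ = ‖(w t' - wbar) - (w t - wbar)‖ := by ring_nf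
        _ ≤ ‖w t' - wbar‖ + ‖w t - wbar‖ := norm_sub_le _ _
        _ ≤ 2 * r := by linarith
    have habs : |Bform (π t) (w t' - w t)| ≤ 2 * (C * r) := by
      calc |Bform (π t) (w t' - w t)| ≤ cSize (π t) * ‖w t' - w t‖ := Bform_abs_le _ _
        _ ≤ C * (2 * r) := mul_le_mul (hC _ (hπ t)) hnorm (norm_nonneg _) hC0
        _ = 2 * (C * r) := by ring
    have := le_abs_self (Bform (π t) (w t' - w t))
    linarith
  -- contradiction
  have h1δ : 0 < 1 - δ := by linarith
  nlinarith [mul_pos h1δ hε, mul_le_mul_of_nonneg_left hCr h1δ.le,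
    mul_nonneg hδ0 (mul_pos h1δ hε).le]
end

section
/- Let S be a nonempty finite set, p : S → ℝ with p_s > 0 for all s and Σ_{s∈S} p_s = 1, c ∈ ℝ^n, and for each s ∈ S let K^s ⊆ ℝ^n × ℝ^m be a nonempty finite set and q^s ∈ ℝ^m. Assume there exists x ∈ ℝ^n such that for every s ∈ S there is y^s with (x, y^s) ∈ convexHull(K^s). Then the supremum over all λ : S → ℝ^n with Σ_{s∈S} p_s λ^s = 0 of Σ_{s∈S} p_s · min{(c + λ^s)·x' + q^s·y' : (x',y') ∈ K^s} equals the minimum of c·x + Σ_{s∈S} p_s (q^s·y^s) over all (x, (y^s)_{s∈S}) with (x, y^s) ∈ convexHull(K^s) for every s ∈ S. -/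
noncomputable def CS_eval {n m : ℕ} (a : Fin n → ℝ) (b : Fin m → ℝ) :
    ((Fin n → ℝ) × (Fin m → ℝ)) →ₗ[ℝ] ℝ where
  toFun w := (∑ i, a i * w.1 i) + ∑ j, b j * w.2 j
  map_add' w w' := by
    simp only [Prod.fst_add, Prod.snd_add, Pi.add_apply, mul_add, Finset.sum_add_distrib]
    ring
  map_smul' r w := by
    simp only [Prod.smul_fst, Prod.smul_snd, Pi.smul_apply, smul_eq_mul, RingHom.id_apply,
      mul_add, Finset.mul_sum]
    congr 1 <;> exact Finset.sum_congr rfl fun i _ => by ring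

@[simp] lemma CS_eval_apply {n m : ℕ} (a : Fin n → ℝ) (b : Fin m → ℝ)
    (w : (Fin n → ℝ) × (Fin m → ℝ)) :
    CS_eval a b w = (∑ i, a i * w.1 i) + ∑ j, b j * w.2 j := rfl

lemma CS_set_eq {n m : ℕ} (a : Fin n → ℝ) (b : Fin m → ℝ)
    (K : Set ((Fin n → ℝ) × (Fin m → ℝ))) :
    {r : ℝ | ∃ w ∈ K, r = (∑ i, a i * w.1 i) + ∑ j, b j * w.2 j} = (CS_eval a b) '' K := by
  ext r
  constructor
  · rintro ⟨w, hw, rfl⟩; exact ⟨w, hw, rfl⟩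
  · rintro ⟨w, hw, rfl⟩; exact ⟨w, hw, rfl⟩

lemma CS_inf_mem {n m : ℕ} (a : Fin n → ℝ) (b : Fin m → ℝ)
    {K : Set ((Fin n → ℝ) × (Fin m → ℝ))} (hfin : K.Finite) (hne : K.Nonempty) :
    ∃ w ∈ K, sInf {r : ℝ | ∃ w ∈ K, r = (∑ i, a i * w.1 i) + ∑ j, b j * w.2 j}
      = (∑ i, a i * w.1 i) + ∑ j, b j * w.2 j := by
  have h := Set.Nonempty.csInf_mem
    (s := {r : ℝ | ∃ w ∈ K, r = (∑ i, a i * w.1 i) + ∑ j, b j * w.2 j})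
    ⟨_, hne.choose, hne.choose_spec, rfl⟩ ?_
  · exact h
  · rw [CS_set_eq]; exact hfin.image _

lemma CS_inf_le_hull {n m : ℕ} (a : Fin n → ℝ) (b : Fin m → ℝ)
    {K : Set ((Fin n → ℝ) × (Fin m → ℝ))} (hfin : K.Finite)
    {z : (Fin n → ℝ) × (Fin m → ℝ)} (hz : z ∈ convexHull ℝ K) :
    sInf {r : ℝ | ∃ w ∈ K, r = (∑ i, a i * w.1 i) + ∑ j, b j * w.2 j}
      ≤ (∑ i, a i * z.1 i) + ∑ j, b j * z.2 j := by
  set T := {r : ℝ | ∃ w ∈ K, r = (∑ i, a i * w.1 i) + ∑ j, b j * w.2 j}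
  have hT : T = (CS_eval a b) '' K := CS_set_eq a b K
  have hsub : K ⊆ (CS_eval a b) ⁻¹' Set.Ici (sInf T) := by
    intro w hw
    have hwT : (CS_eval a b) w ∈ T := hT ▸ ⟨w, hw, rfl⟩
    have hbdd : BddBelow T := (hT ▸ hfin.image _).bddBelow
    exact csInf_le hbdd hwT
  exact convexHull_min hsub ((convex_Ici _).linear_preimage _) hz

/-- Weak duality. -/
lemma CS_weak {n m : ℕ} {S : Type*} [Fintype S]
    (p : S → ℝ) (hp : ∀ s, 0 < p s) (hpsum : ∑ s, p s = 1)
    (c : Fin n → ℝ) (K : S → Set ((Fin n → ℝ) × (Fin m → ℝ)))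
    (hKfin : ∀ s, (K s).Finite) (q : S → Fin m → ℝ)
    (lam : S → Fin n → ℝ) (hlam : (∑ s, p s • lam s) = 0)
    (x : Fin n → ℝ) (y : S → Fin m → ℝ) (hxy : ∀ s, (x, y s) ∈ convexHull ℝ (K s)) :
    ∑ s, p s * sInf {r : ℝ | ∃ w ∈ K s,
        r = (∑ i, (c i + lam s i) * w.1 i) + ∑ j, q s j * w.2 j}
      ≤ (∑ i, c i * x i) + ∑ s, p s * (∑ j, q s j * y s j) := by
  have h0 : ∀ i, ∑ s, p s * lam s i = 0 := by
    intro i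
    have := congrFun hlam i
    simpa [Finset.sum_apply] using this
  have hstep : ∀ s, sInf {r : ℝ | ∃ w ∈ K s,
        r = (∑ i, (c i + lam s i) * w.1 i) + ∑ j, q s j * w.2 j}
      ≤ (∑ i, (c i + lam s i) * x i) + ∑ j, q s j * y s j :=
    fun s => CS_inf_le_hull (fun i => c i + lam s i) (q s) (hKfin s) (hxy s)
  calc ∑ s, p s * sInf {r : ℝ | ∃ w ∈ K s,
        r = (∑ i, (c i + lam s i) * w.1 i) + ∑ j, q s j * w.2 j}
      ≤ ∑ s, p s * ((∑ i, (c i + lam s i) * x i) + ∑ j, q s j * y s j) :=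
        Finset.sum_le_sum fun s _ => mul_le_mul_of_nonneg_left (hstep s) (hp s).le
    _ = ∑ s, (p s * (∑ i, c i * x i) + p s * (∑ i, lam s i * x i)
          + p s * (∑ j, q s j * y s j)) := by
        refine Finset.sum_congr rfl fun s _ => ?_
        have : (∑ i, (c i + lam s i) * x i) = (∑ i, c i * x i) + ∑ i, lam s i * x i := by
          rw [← Finset.sum_add_distrib]
          exact Finset.sum_congr rfl fun i _ => by ring
        rw [this]; ring
    _ = (∑ s, p s) * (∑ i, c i * x i) + (∑ s, p s * ∑ i, lam s i * x i)
          + ∑ s, p s * (∑ j, q s j * y s j) := by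
        rw [Finset.sum_add_distrib, Finset.sum_add_distrib, Finset.sum_mul]
    _ = (∑ i, c i * x i) + ∑ s, p s * (∑ j, q s j * y s j) := by
        have hmid : (∑ s, p s * ∑ i, lam s i * x i) = 0 := by
          have h1 : ∀ s, p s * ∑ i, lam s i * x i = ∑ i, (p s * lam s i) * x i := fun s => by
            rw [Finset.mul_sum]; exact Finset.sum_congr rfl fun i _ => by ring
          rw [Finset.sum_congr rfl fun s _ => h1 s, Finset.sum_comm]
          simp [← Finset.sum_mul, h0]
        rw [hmid, hpsum]; ring

set_option maxHeartbeats 1000000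

/-- Theorem 2.1 (Carøe and Schultz): the nonanticipative Lagrangian dual bound equals
the optimal value of the convexified primal problem, for finite scenario feasible sets. -/
theorem stmt_6 {n m : ℕ} {S : Type*} [Fintype S] [Nonempty S]
    (p : S → ℝ) (hp : ∀ s, 0 < p s) (hpsum : ∑ s, p s = 1)
    (c : Fin n → ℝ)
    (K : S → Set ((Fin n → ℝ) × (Fin m → ℝ)))
    (hKfin : ∀ s, (K s).Finite) (hKne : ∀ s, (K s).Nonempty)
    (q : S → Fin m → ℝ)
    (hfeas : ∃ x : Fin n → ℝ, ∀ s, ∃ y : Fin m → ℝ, (x, y) ∈ convexHull ℝ (K s)) :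
    sSup {v : ℝ | ∃ lam : S → Fin n → ℝ, (∑ s, p s • lam s) = 0 ∧
        v = ∑ s, p s * sInf {r : ℝ | ∃ w ∈ K s,
            r = (∑ i, (c i + lam s i) * w.1 i) + ∑ j, q s j * w.2 j}} =
    sInf {v : ℝ | ∃ (x : Fin n → ℝ) (y : S → Fin m → ℝ),
        (∀ s, (x, y s) ∈ convexHull ℝ (K s)) ∧
        v = (∑ i, c i * x i) + ∑ s, p s * (∑ j, q s j * y s j)} := by
  classical
  set D := {v : ℝ | ∃ lam : S → Fin n → ℝ, (∑ s, p s • lam s) = 0 ∧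
      v = ∑ s, p s * sInf {r : ℝ | ∃ w ∈ K s,
          r = (∑ i, (c i + lam s i) * w.1 i) + ∑ j, q s j * w.2 j}} with hD
  set P := {v : ℝ | ∃ (x : Fin n → ℝ) (y : S → Fin m → ℝ),
      (∀ s, (x, y s) ∈ convexHull ℝ (K s)) ∧
      v = (∑ i, c i * x i) + ∑ s, p s * (∑ j, q s j * y s j)} with hP
  obtain ⟨x₀, hx₀⟩ := hfeas
  choose y₀ hy₀ using hx₀
  have hPne : P.Nonempty := ⟨_, x₀, y₀, hy₀, rfl⟩
  have hDne : D.Nonempty := ⟨_, 0, by simp, rfl⟩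
  have hweak : ∀ v ∈ D, ∀ w ∈ P, v ≤ w := by
    rintro v ⟨lam, hlam, rfl⟩ w ⟨x, y, hxy, rfl⟩
    exact CS_weak p hp hpsum c K hKfin q lam hlam x y hxy
  obtain ⟨w₀, hw₀⟩ := hPne
  obtain ⟨v₀, hv₀⟩ := hDne
  have hDbdd : BddAbove D := ⟨w₀, fun v hv => hweak v hv w₀ hw₀⟩
  have hPbdd : BddBelow P := ⟨v₀, fun w hw => hweak v₀ hv₀ w hw⟩
  refine le_antisymm (csSup_le ⟨v₀, hv₀⟩ fun v hv => le_csInf ⟨w₀, hw₀⟩ fun w hw => hweak v hv w hw) ?_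
  -- strong duality
  refine le_of_forall_lt fun t ht => ?_
  -- the separation setup
  set Φ : (S → ((Fin n → ℝ) × (Fin m → ℝ))) →ₗ[ℝ] ((S → (Fin n → ℝ)) × ℝ) :=
    (LinearMap.pi (fun s => ((LinearMap.fst ℝ (Fin n → ℝ) (Fin m → ℝ)).comp (LinearMap.proj s)
        - ∑ t', p t' • ((LinearMap.fst ℝ (Fin n → ℝ) (Fin m → ℝ)).comp (LinearMap.proj t'))))).prod
      (∑ s, p s • ((CS_eval c (q s)).comp (LinearMap.proj s))) with hΦ
  have hΦ1 : ∀ z, (Φ z).1 = fun s => (z s).1 - ∑ t', p t' • (z t').1 := by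
    intro z
    funext s
    simp [hΦ, LinearMap.pi_apply]
  have hΦ2 : ∀ z, (Φ z).2
      = ∑ s, p s * ((∑ i, c i * (z s).1 i) + ∑ j, q s j * (z s).2 j) := by
    intro z
    simp [hΦ, LinearMap.sum_apply]
  set C : Set ((S → (Fin n → ℝ)) × ℝ) :=
    Φ '' (Set.univ.pi (fun s => convexHull ℝ (K s))) with hC
  have hCconv : Convex ℝ C := (convex_pi fun s _ => convex_convexHull ℝ _).linear_image Φ
  have hCcomp : IsCompact C :=
    (isCompact_univ_pi fun s => (hKfin s).isCompact_convexHull (𝕜 := ℝ)).image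
      Φ.continuous_of_finiteDimensional
  set L : Set ((S → (Fin n → ℝ)) × ℝ) := ({0} : Set (S → Fin n → ℝ)) ×ˢ Set.Iic t with hL
  have hLconv : Convex ℝ L := (convex_singleton _).prod (convex_Iic _)
  have hLclosed : IsClosed L := isClosed_singleton.prod isClosed_Iic
  have hdisj : Disjoint C L := by
    rw [Set.disjoint_left]
    rintro e ⟨z, hz, rfl⟩ ⟨he1, he2⟩
    simp only [Set.mem_singleton_iff] at he1
    have hxeq : ∀ s, (z s).1 = ∑ t', p t' • (z t').1 := by
      intro s
      have := congrFun (hΦ1 z ▸ he1) s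
      exact sub_eq_zero.mp this
    have hzmem : ∀ s, z s ∈ convexHull ℝ (K s) := fun s => hz s (Set.mem_univ s)
    have hmemP : (Φ z).2 ∈ P := by
      refine ⟨∑ t', p t' • (z t').1, fun s => (z s).2, ?_, ?_⟩
      · intro s
        have : ((∑ t', p t' • (z t').1, (z s).2) : (Fin n → ℝ) × (Fin m → ℝ)) = z s := by
          rw [← hxeq s]
        rw [this]; exact hzmem s
      · rw [hΦ2 z]
        have : ∀ s, p s * ((∑ i, c i * (z s).1 i) + ∑ j, q s j * (z s).2 j)
            = p s * (∑ i, c i * (∑ t', p t' • (z t').1) i) + p s * (∑ j, q s j * (z s).2 j) := by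
          intro s; rw [hxeq s]; ring
        rw [Finset.sum_congr rfl fun s _ => this s, Finset.sum_add_distrib, ← Finset.sum_mul,
          hpsum, one_mul]
    have h1 : sInf P ≤ (Φ z).2 := csInf_le hPbdd hmemP
    have h2 : (Φ z).2 ≤ t := he2
    linarith
  obtain ⟨f, u, v, hfu, huv, hvL⟩ :=
    geometric_hahn_banach_compact_closed hCconv hCcomp hLconv hLclosed hdisj
  set μ : ℝ := f ((0 : S → Fin n → ℝ), (1 : ℝ)) with hμ
  have hf0r : ∀ r : ℝ, f ((0 : S → Fin n → ℝ), r) = r * μ := by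
    intro r
    have : ((0 : S → Fin n → ℝ), r) = r • ((0 : S → Fin n → ℝ), (1 : ℝ)) := by
      simp [Prod.smul_mk]
    rw [this, map_smul, smul_eq_mul]
  have hvr : ∀ r ≤ t, v < r * μ := by
    intro r hr
    have : ((0 : S → Fin n → ℝ), r) ∈ L := ⟨rfl, hr⟩
    have := hvL _ this
    rwa [hf0r] at this
  -- feasibility point
  set z₀ : S → ((Fin n → ℝ) × (Fin m → ℝ)) := fun s => (x₀, y₀ s) with hz₀def
  have hz₀mem : z₀ ∈ Set.univ.pi (fun s => convexHull ℝ (K s)) := fun s _ => hy₀ s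
  have hΦz₀1 : (Φ z₀).1 = 0 := by
    rw [hΦ1]
    funext s
    simp only [hz₀def, Pi.zero_apply]
    rw [← Finset.sum_smul, hpsum, one_smul, sub_self]
  have hfz₀ : f (Φ z₀) = (Φ z₀).2 * μ := by
    have : Φ z₀ = ((0 : S → Fin n → ℝ), (Φ z₀).2) := by
      rw [Prod.ext_iff]; exact ⟨hΦz₀1, rfl⟩
    rw [this, hf0r]
  have hμneg : μ < 0 := by
    rcases lt_trichotomy μ 0 with h | h | h
    · exact h
    · exfalso
      have h1 : v < t * μ := hvr t le_rfl
      have h2 : f (Φ z₀) < u := hfu _ ⟨z₀, hz₀mem, rfl⟩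
      rw [hfz₀, h, mul_zero] at h2
      rw [h, mul_zero] at h1
      linarith
    · exfalso
      have h1 : v < (min t ((v - 1) / μ)) * μ := hvr _ (min_le_left _ _)
      have h2 : (min t ((v - 1) / μ)) * μ ≤ ((v - 1) / μ) * μ :=
        mul_le_mul_of_nonneg_right (min_le_right _ _) h.le
      rw [div_mul_cancel₀ _ h.ne'] at h2
      linarith
  -- decomposition of f
  set gl : S → ((Fin n → ℝ) →ₗ[ℝ] ℝ) := fun s =>
    (f : ((S → (Fin n → ℝ)) × ℝ) →ₗ[ℝ] ℝ).comp
      ((LinearMap.inl ℝ (S → Fin n → ℝ) ℝ).comp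
        (LinearMap.single ℝ (fun _ : S => Fin n → ℝ) s)) with hgl
  have hglapp : ∀ s (w : Fin n → ℝ), gl s w = f ((Pi.single s w : S → Fin n → ℝ), (0 : ℝ)) := by
    intro s w; rfl
  have hdecomp : ∀ w : S → Fin n → ℝ, f (w, (0 : ℝ)) = ∑ s, gl s (w s) := by
    intro w
    have h1 : ((w, (0 : ℝ)) : (S → Fin n → ℝ) × ℝ)
        = ∑ s, ((Pi.single s (w s) : S → Fin n → ℝ), (0 : ℝ)) := by
      rw [Prod.ext_iff]
      constructor
      · rw [Prod.fst_sum]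
        exact (Finset.univ_sum_single w).symm
      · rw [Prod.snd_sum]
        simp
    rw [h1, map_sum]
    exact Finset.sum_congr rfl fun s _ => (hglapp s (w s)).symm
  set G : (Fin n → ℝ) →ₗ[ℝ] ℝ := ∑ s, gl s with hG
  have hGapp : ∀ w, G w = ∑ s, gl s w := by
    intro w; rw [hG, LinearMap.sum_apply]
  -- basis expansion
  have hbasis : ∀ (g : (Fin n → ℝ) →ₗ[ℝ] ℝ) (x : Fin n → ℝ),
      g x = ∑ i, x i * g (Pi.single i 1) := by
    intro g x
    have hx : x = ∑ i, x i • (Pi.single i (1:ℝ) : Fin n → ℝ) := by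
      have h1 : ∀ i, (Pi.single i (x i) : Fin n → ℝ) = x i • (Pi.single i (1:ℝ) : Fin n → ℝ) := by
        intro i
        funext j
        simp [Pi.single_apply, mul_ite, mul_one, mul_zero]
      conv_lhs => rw [← Finset.univ_sum_single x]
      exact Finset.sum_congr rfl fun i _ => h1 i
    conv_lhs => rw [hx]
    rw [map_sum]
    exact Finset.sum_congr rfl fun i _ => by rw [map_smul, smul_eq_mul]
  set lam : S → Fin n → ℝ := fun s i =>
    (gl s (Pi.single i 1) - p s * G (Pi.single i 1)) / (μ * p s) with hlamdef
  have hplam : ∀ s i, p s * lam s i = (gl s (Pi.single i 1) - p s * G (Pi.single i 1)) / μ := by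
    intro s i
    have hps : p s ≠ 0 := (hp s).ne'
    have hμne : μ ≠ 0 := hμneg.ne
    rw [hlamdef]
    field_simp
  have hlamdot : ∀ s (x : Fin n → ℝ),
      p s * ∑ i, lam s i * x i = (gl s x - p s * G x) / μ := by
    intro s x
    rw [Finset.mul_sum]
    have h1 : ∀ i, p s * (lam s i * x i)
        = (x i * gl s (Pi.single i 1) - p s * (x i * G (Pi.single i 1))) / μ := by
      intro i
      rw [show p s * (lam s i * x i) = (p s * lam s i) * x i by ring, hplam s i,
        div_mul_eq_mul_div]
      congr 1
      ring
    rw [Finset.sum_congr rfl fun i _ => h1 i, ← Finset.sum_div]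
    rw [hbasis (gl s) x, hbasis G x]
    congr 1
    rw [Finset.mul_sum, ← Finset.sum_sub_distrib]
  have hlam0 : (∑ s, p s • lam s) = 0 := by
    funext i
    have h1 : (∑ s, p s • lam s) i = ∑ s, p s * lam s i := by
      rw [Finset.sum_apply]
      exact Finset.sum_congr rfl fun s _ => rfl
    rw [h1]
    have h2 : ∑ s, p s * lam s i
        = ((∑ s, gl s (Pi.single i 1)) - (∑ s, p s) * G (Pi.single i 1)) / μ := by
      rw [Finset.sum_congr rfl fun s _ => hplam s i, ← Finset.sum_div, Finset.sum_sub_distrib,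
        ← Finset.sum_mul]
    rw [Pi.zero_apply, h2, hpsum, one_mul, ← hGapp, sub_self, zero_div]
  -- the key inequality
  have hkey : ∀ z : S → ((Fin n → ℝ) × (Fin m → ℝ)),
      (∀ s, z s ∈ convexHull ℝ (K s)) →
      t < ∑ s, p s * ((∑ i, (c i + lam s i) * (z s).1 i) + ∑ j, q s j * (z s).2 j) := by
    intro z hz
    have hmem : z ∈ Set.univ.pi (fun s => convexHull ℝ (K s)) := fun s _ => hz s
    have h1 : f (Φ z) < t * μ := by
      have := hfu _ ⟨z, hmem, rfl⟩
      have h2 := hvr t le_rfl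
      linarith
    have hφsplit : f (Φ z) = f ((Φ z).1, (0 : ℝ)) + (Φ z).2 * μ := by
      have hpair : Φ z = (((Φ z).1, (0 : ℝ)) : (S → Fin n → ℝ) × ℝ)
          + (Φ z).2 • ((0 : S → Fin n → ℝ), (1 : ℝ)) := by
        rw [Prod.ext_iff]
        constructor
        · simp
        · simp
      conv_lhs => rw [hpair]
      rw [map_add, map_smul, smul_eq_mul, ← hμ]
    have hf1 : f ((Φ z).1, (0 : ℝ)) = (∑ s, gl s ((z s).1)) - ∑ s, p s * G ((z s).1) := by
      rw [hdecomp]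
      have h3 : ∀ s, gl s ((Φ z).1 s) = gl s ((z s).1) - gl s (∑ t', p t' • (z t').1) := by
        intro s
        rw [hΦ1 z]
        rw [map_sub]
      rw [Finset.sum_congr rfl fun s _ => h3 s, Finset.sum_sub_distrib]
      congr 1
      have h4 : ∀ s, gl s (∑ t', p t' • (z t').1) = G (∑ t', p t' • (z t').1) - 
          (G (∑ t', p t' • (z t').1) - gl s (∑ t', p t' • (z t').1)) := by intro s; ring
      have h5 : (∑ s, gl s (∑ t', p t' • (z t').1)) = G (∑ t', p t' • (z t').1) :=
        (hGapp _).symm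
      rw [h5]
      rw [map_sum]
      exact Finset.sum_congr rfl fun t' _ => by rw [map_smul, smul_eq_mul]
    have heq : ∑ s, p s * ((∑ i, (c i + lam s i) * (z s).1 i) + ∑ j, q s j * (z s).2 j)
        = f (Φ z) / μ := by
      have h6 : ∀ s, p s * ((∑ i, (c i + lam s i) * (z s).1 i) + ∑ j, q s j * (z s).2 j)
          = p s * ((∑ i, c i * (z s).1 i) + ∑ j, q s j * (z s).2 j)
            + p s * ∑ i, lam s i * (z s).1 i := by
        intro s
        have : (∑ i, (c i + lam s i) * (z s).1 i)
            = (∑ i, c i * (z s).1 i) + ∑ i, lam s i * (z s).1 i := by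
          rw [← Finset.sum_add_distrib]
          exact Finset.sum_congr rfl fun i _ => by ring
        rw [this]; ring
      rw [Finset.sum_congr rfl fun s _ => h6 s, Finset.sum_add_distrib, ← hΦ2 z,
        Finset.sum_congr rfl fun s _ => hlamdot s ((z s).1), ← Finset.sum_div,
        Finset.sum_sub_distrib, ← hf1, hφsplit]
      have hμne : μ ≠ 0 := hμneg.ne
      field_simp
      ring
    rw [heq, lt_div_iff_of_neg hμneg]
    exact h1
  -- choose minimizers
  have hmin : ∀ s, ∃ w ∈ K s, sInf {r : ℝ | ∃ w ∈ K s,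
      r = (∑ i, (c i + lam s i) * w.1 i) + ∑ j, q s j * w.2 j}
      = (∑ i, (c i + lam s i) * w.1 i) + ∑ j, q s j * w.2 j :=
    fun s => CS_inf_mem (fun i => c i + lam s i) (q s) (hKfin s) (hKne s)
  choose w hwK hwval using hmin
  have hdval : (∑ s, p s * sInf {r : ℝ | ∃ w ∈ K s,
      r = (∑ i, (c i + lam s i) * w.1 i) + ∑ j, q s j * w.2 j}) ∈ D :=
    ⟨lam, hlam0, rfl⟩
  have hgt : t < ∑ s, p s * sInf {r : ℝ | ∃ w ∈ K s,
      r = (∑ i, (c i + lam s i) * w.1 i) + ∑ j, q s j * w.2 j} := by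
    have := hkey w (fun s => subset_convexHull ℝ _ (hwK s))
    calc t < ∑ s, p s * ((∑ i, (c i + lam s i) * (w s).1 i) + ∑ j, q s j * (w s).2 j) := this
      _ = ∑ s, p s * sInf {r : ℝ | ∃ w ∈ K s,
          r = (∑ i, (c i + lam s i) * w.1 i) + ∑ j, q s j * w.2 j} :=
        Finset.sum_congr rfl fun s _ => by rw [hwval s]
  exact lt_of_lt_of_le hgt (le_csSup hDbdd hdval)
end

section
/- Let K ⊆ ℝ^n × ℝ^m be nonempty, q ∈ ℝ^m, c ∈ ℝ^n, and suppose the set {c·x' + q·y' : (x',y') ∈ K} is bounded below, with v = inf{c·x' + q·y' : (x',y') ∈ K}. Then the infimum of c·x + θ over all (x,θ) ∈ ℝ^n × ℝ satisfying every Lagrangian cut — i.e. satisfying π·x + π₀θ ≥ inf{π·x' + π₀(q·y') : (x',y') ∈ K} for every (π,π₀) ∈ ℝ^n × ℝ with π₀ ≥ 0 such that the set {π·x' + π₀(q·y') : (x',y') ∈ K} is bounded below — is equal to v. -/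
/-- Single-scenario case of Theorem 3.2: the Benders master problem with all
Lagrangian cuts added has optimal value equal to the original optimal value. -/
theorem stmt_7 {n m : ℕ} (K : Set ((Fin n → ℝ) × (Fin m → ℝ))) (hKne : K.Nonempty)
    (q : Fin m → ℝ) (c : Fin n → ℝ)
    (hbdd : BddBelow {r : ℝ | ∃ w ∈ K, r = (∑ i, c i * w.1 i) + ∑ j, q j * w.2 j}) :
    sInf {z : ℝ | ∃ (x : Fin n → ℝ) (θ : ℝ),
      (∀ (π : Fin n → ℝ) (π₀ : ℝ), 0 ≤ π₀ →
        BddBelow {r : ℝ | ∃ w ∈ K, r = (∑ i, π i * w.1 i) + π₀ * (∑ j, q j * w.2 j)} →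
        (∑ i, π i * x i) + π₀ * θ ≥
          sInf {r : ℝ | ∃ w ∈ K, r = (∑ i, π i * w.1 i) + π₀ * (∑ j, q j * w.2 j)}) ∧
      z = (∑ i, c i * x i) + θ} =
    sInf {r : ℝ | ∃ w ∈ K, r = (∑ i, c i * w.1 i) + ∑ j, q j * w.2 j} := by
  set S : Set ℝ := {r : ℝ | ∃ w ∈ K, r = (∑ i, c i * w.1 i) + ∑ j, q j * w.2 j} with hS
  set M : Set ℝ := {z : ℝ | ∃ (x : Fin n → ℝ) (θ : ℝ),
      (∀ (π : Fin n → ℝ) (π₀ : ℝ), 0 ≤ π₀ →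
        BddBelow {r : ℝ | ∃ w ∈ K, r = (∑ i, π i * w.1 i) + π₀ * (∑ j, q j * w.2 j)} →
        (∑ i, π i * x i) + π₀ * θ ≥
          sInf {r : ℝ | ∃ w ∈ K, r = (∑ i, π i * w.1 i) + π₀ * (∑ j, q j * w.2 j)}) ∧
      z = (∑ i, c i * x i) + θ} with hM
  have hset : {r : ℝ | ∃ w ∈ K, r = (∑ i, c i * w.1 i) + 1 * (∑ j, q j * w.2 j)} = S := by
    simp [hS, one_mul]
  have hSne : S.Nonempty := by
    obtain ⟨w, hw⟩ := hKne
    exact ⟨_, w, hw, rfl⟩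
  -- every element of S is in M
  have hsub : S ⊆ M := by
    rintro z ⟨w, hw, rfl⟩
    refine ⟨w.1, ∑ j, q j * w.2 j, fun π π₀ h₀ hb => ?_, rfl⟩
    exact csInf_le hb ⟨w, hw, rfl⟩
  -- every element of M is ≥ sInf S
  have hlb : ∀ z ∈ M, sInf S ≤ z := by
    rintro z ⟨x, θ, hcuts, rfl⟩
    have h := hcuts c 1 zero_le_one (by rw [hset]; exact hbdd)
    rw [hset] at h
    linarith
  apply le_antisymm
  · exact csInf_le_csInf ⟨sInf S, hlb⟩ hSne hsub
  · exact le_csInf (hSne.mono hsub) hlb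
end

section
/- Let K ⊆ ℝ^n × ℝ^m be nonempty, q ∈ ℝ^m, and λ ∈ ℝ^n, and let (x̄,ȳ) ∈ K satisfy λ·x̄ + q·ȳ ≤ λ·x' + q·y' for all (x',y') ∈ K. Then for every (x,y) ∈ K and every θ ∈ ℝ with θ ≥ q·y, the Lagrangian optimality cut λ·(x − x̄) + θ ≥ q·ȳ holds. -/
/-- Validity of the Lagrangian optimality cut (inequality (3)). -/
theorem stmt_9 {n m : ℕ} (K : Set ((Fin n → ℝ) × (Fin m → ℝ))) (hKne : K.Nonempty)
    (q : Fin m → ℝ) (lam : Fin n → ℝ)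
    (xb : (Fin n → ℝ) × (Fin m → ℝ)) (hxb : xb ∈ K)
    (hmin : ∀ w ∈ K, (∑ i, lam i * xb.1 i) + (∑ j, q j * xb.2 j) ≤
        (∑ i, lam i * w.1 i) + (∑ j, q j * w.2 j)) :
    ∀ w ∈ K, ∀ θ : ℝ, θ ≥ ∑ j, q j * w.2 j →
      (∑ i, lam i * (w.1 i - xb.1 i)) + θ ≥ ∑ j, q j * xb.2 j := by
  intro w hw θ hθ
  have h := hmin w hw
  have hsplit : (∑ i, lam i * (w.1 i - xb.1 i)) =
      (∑ i, lam i * w.1 i) - (∑ i, lam i * xb.1 i) := by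
    rw [← Finset.sum_sub_distrib]; congr 1; ext i; ring
  rw [hsplit]; linarith
end

section
/- Let X ⊆ ℝ^n and Y ⊆ ℝ^{n_y} be sets, A an k × n real matrix, b ∈ ℝ^k, T an l × n real matrix, W an l × n_y real matrix, h ∈ ℝ^l, and λ ∈ ℝ^n. Let F = {(x,y,u,v) : x ∈ X, y ∈ Y, u ∈ ℝ^k, v ∈ ℝ^l, u ≥ 0, v ≥ 0, Ax + u ≥ b, Tx + Wy + v ≥ h} (inequalities componentwise), and let (x̂,ŷ,û,v̂) ∈ F satisfy 𝟙·v̂ + 𝟙·û + λ·x̂ ≤ 𝟙·v + 𝟙·u + λ·x for every (x,y,u,v) ∈ F. Then for every (x,y) with x ∈ X, y ∈ Y, Ax ≥ b and Tx + Wy ≥ h, the Lagrangian feasibility cut λ·(x − x̂) ≥ 𝟙·v̂ + 𝟙·û holds. -/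
/-- Validity of the Lagrangian feasibility cut (inequality (4)). -/
theorem stmt_10 {n ny k l : ℕ} (X : Set (Fin n → ℝ)) (Y : Set (Fin ny → ℝ))
    (A : Matrix (Fin k) (Fin n) ℝ) (b : Fin k → ℝ)
    (T : Matrix (Fin l) (Fin n) ℝ) (W : Matrix (Fin l) (Fin ny) ℝ) (h : Fin l → ℝ)
    (lam : Fin n → ℝ)
    (xh : Fin n → ℝ) (yh : Fin ny → ℝ) (uh : Fin k → ℝ) (vh : Fin l → ℝ)
    (hxh : xh ∈ X) (hyh : yh ∈ Y) (huh : ∀ i, 0 ≤ uh i) (hvh : ∀ i, 0 ≤ vh i)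
    (hAh : ∀ i, A.mulVec xh i + uh i ≥ b i)
    (hTh : ∀ i, T.mulVec xh i + W.mulVec yh i + vh i ≥ h i)
    (hmin : ∀ (x : Fin n → ℝ) (y : Fin ny → ℝ) (u : Fin k → ℝ) (v : Fin l → ℝ),
      x ∈ X → y ∈ Y → (∀ i, 0 ≤ u i) → (∀ i, 0 ≤ v i) →
      (∀ i, A.mulVec x i + u i ≥ b i) →
      (∀ i, T.mulVec x i + W.mulVec y i + v i ≥ h i) →
      (∑ i, vh i) + (∑ i, uh i) + (∑ i, lam i * xh i) ≤
        (∑ i, v i) + (∑ i, u i) + (∑ i, lam i * x i)) :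
    ∀ (x : Fin n → ℝ) (y : Fin ny → ℝ), x ∈ X → y ∈ Y →
      (∀ i, A.mulVec x i ≥ b i) → (∀ i, T.mulVec x i + W.mulVec y i ≥ h i) →
      (∑ i, lam i * (x i - xh i)) ≥ (∑ i, vh i) + ∑ i, uh i := by
  intro x y hx hy hA hT
  have := hmin x y (fun _ => 0) (fun _ => 0) hx hy (fun _ => le_refl 0)
    (fun _ => le_refl 0) (fun i => by simpa using hA i) (fun i => by simpa using hT i)
  simp only [Finset.sum_const_zero, zero_add] at this
  have : (∑ i, lam i * (x i - xh i)) = (∑ i, lam i * x i) - ∑ i, lam i * xh i := by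
    rw [← Finset.sum_sub_distrib]; congr 1; ext i; ring
  linarith [hmin x y (fun _ => 0) (fun _ => 0) hx hy (fun _ => le_refl 0)
    (fun _ => le_refl 0) (fun i => by simpa using hA i) (fun i => by simpa using hT i)]
end

section
/- Let n ∈ ℕ, let Q : (Fin n → ℝ) → ℝ, and let L ∈ ℝ satisfy Q(z) ≥ L for every z : Fin n → ℝ with z_i ∈ {0,1} for all i. Let x̂ and x be points of {0,1}^n (i.e. x̂_i, x_i ∈ {0,1} for all i), and let θ ∈ ℝ with θ ≥ Q(x). Then θ ≥ Q(x̂) − (Q(x̂) − L) · ( Σ_{i : x̂_i = 1} (1 − x_i) + Σ_{i : x̂_i = 0} x_i ). -/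
/-- Validity of the integer L-shaped cut (inequality (2)) of Laporte and Louveaux. -/
theorem stmt_12 {n : ℕ} (Q : (Fin n → ℝ) → ℝ) (L : ℝ)
    (hL : ∀ z : Fin n → ℝ, (∀ i, z i = 0 ∨ z i = 1) → Q z ≥ L)
    (xh x : Fin n → ℝ) (hxh : ∀ i, xh i = 0 ∨ xh i = 1) (hx : ∀ i, x i = 0 ∨ x i = 1)
    (θ : ℝ) (hθ : θ ≥ Q x) :
    θ ≥ Q xh - (Q xh - L) *
      ((∑ i ∈ Finset.univ.filter (fun i => xh i = 1), (1 - x i)) +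
        ∑ i ∈ Finset.univ.filter (fun i => xh i = 0), x i) := by
  set S1 := ∑ i ∈ Finset.univ.filter (fun i => xh i = 1), (1 - x i) with hS1
  set S2 := ∑ i ∈ Finset.univ.filter (fun i => xh i = 0), x i with hS2
  have h1nn : ∀ i ∈ Finset.univ.filter (fun i => xh i = 1), (0:ℝ) ≤ 1 - x i := by
    intro i _; rcases hx i with h | h <;> simp [h]
  have h2nn : ∀ i ∈ Finset.univ.filter (fun i => xh i = 0), (0:ℝ) ≤ x i := by
    intro i _; rcases hx i with h | h <;> simp [h]
  have hS1nn : 0 ≤ S1 := Finset.sum_nonneg h1nn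
  have hS2nn : 0 ≤ S2 := Finset.sum_nonneg h2nn
  by_cases hzero : S1 + S2 = 0
  · -- then each term is zero, so x = xh
    have hS1z : S1 = 0 := by linarith
    have hS2z : S2 = 0 := by linarith
    have h1 := (Finset.sum_eq_zero_iff_of_nonneg h1nn).mp hS1z
    have h2 := (Finset.sum_eq_zero_iff_of_nonneg h2nn).mp hS2z
    have hxe : x = xh := by
      funext i
      rcases hxh i with h | h
      · have := h2 i (by simp [h]); rw [this, h]
      · have := h1 i (by simp [h]); rw [h]; linarith
    rw [hzero]
    simp
    calc Q xh = Q x := by rw [hxe]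
    _ ≤ θ := hθ
  · -- S1 + S2 ≥ 1
    have hmem : ∃ i, (i ∈ Finset.univ.filter (fun i => xh i = 1) ∧ (1:ℝ) - x i ≠ 0)
        ∨ (i ∈ Finset.univ.filter (fun i => xh i = 0) ∧ x i ≠ 0) := by
      by_contra hc
      push_neg at hc
      apply hzero
      have e1 : S1 = 0 := Finset.sum_eq_zero (fun i hi => by
        have := hc i; tauto)
      have e2 : S2 = 0 := Finset.sum_eq_zero (fun i hi => by
        have := hc i; tauto)
      rw [e1, e2]; ring
    obtain ⟨i, hi⟩ := hmem
    have hge1 : 1 ≤ S1 + S2 := by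
      rcases hi with ⟨hi, hne⟩ | ⟨hi, hne⟩
      · have hterm : (1:ℝ) - x i = 1 := by
          rcases hx i with h | h
          · simp [h]
          · exfalso; apply hne; simp [h]
        have : (1:ℝ) ≤ S1 := by
          calc (1:ℝ) = 1 - x i := hterm.symm
          _ ≤ S1 := Finset.single_le_sum h1nn hi
        linarith
      · have hterm : x i = 1 := (hx i).resolve_left hne
        have : (1:ℝ) ≤ S2 := by
          calc (1:ℝ) = x i := hterm.symm
          _ ≤ S2 := Finset.single_le_sum h2nn hi
        linarith
    have hLQ : Q xh - L ≥ 0 := by have := hL xh hxh; linarith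
    have hLx : Q x ≥ L := hL x hx
    nlinarith [mul_le_mul_of_nonneg_left hge1 hLQ]
end

section
/- Let K ⊆ ℝ^n × ℝ^m be nonempty and compact and q ∈ ℝ^m, and define U = {(x,θ) ∈ ℝ^n × ℝ : ∃y, (x,y) ∈ convexHull(K) and θ ≥ q·y}. If (x̄,θ̄) ∈ ℝ^n × ℝ satisfies π·x̄ + π₀θ̄ ≥ inf{π·x' + π₀(q·y') : (x',y') ∈ K} for every (π,π₀) ∈ ℝ^n × ℝ with π₀ ≥ 0, then (x̄,θ̄) ∈ U. -/
open Pointwise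

lemma sum_dite_fin {M : Type*} [AddCommMonoid M] {k d : ℕ} (hk : k ≤ d) (f : Fin k → M) :
    ∑ i : Fin d, (if h : (i : ℕ) < k then f ⟨i, h⟩ else 0) = ∑ i : Fin k, f i := by
  have h1 : ∑ i : Fin d, (if h : (i : ℕ) < k then f ⟨i, h⟩ else 0)
      = ∑ i ∈ Finset.range d, (if h : i < k then f ⟨i, h⟩ else 0) :=
    Fin.sum_univ_eq_sum_range (fun i => if h : i < k then f ⟨i, h⟩ else 0) d
  have h2 : ∑ i : Fin k, f i
      = ∑ i ∈ Finset.range k, (if h : i < k then f ⟨i, h⟩ else 0) := by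
    rw [← Fin.sum_univ_eq_sum_range (fun i => if h : i < k then f ⟨i, h⟩ else 0) k]
    exact Finset.sum_congr rfl fun i _ => by simp [i.isLt]
  rw [h1, h2]
  exact (Finset.sum_subset (Finset.range_subset_range.2 hk)
    (fun i _ hi => by simp [Finset.mem_range.not.mp hi])).symm

lemma isCompact_convexHull_fd {E : Type*} [NormedAddCommGroup E] [NormedSpace ℝ E]
    [FiniteDimensional ℝ E] {s : Set E} (hne : s.Nonempty) (hs : IsCompact s) :
    IsCompact (convexHull ℝ s) := by
  obtain ⟨a, ha⟩ := hne
  set d := Module.finrank ℝ E + 1 with hd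
  have hT : IsCompact ((stdSimplex ℝ (Fin d)) ×ˢ Set.univ.pi fun _ : Fin d => s) :=
    (isCompact_stdSimplex ℝ (Fin d)).prod (isCompact_univ_pi fun _ => hs)
  have hg : Continuous fun p : (Fin d → ℝ) × (Fin d → E) => ∑ i, p.1 i • p.2 i :=
    continuous_finset_sum _ fun i _ =>
      ((continuous_apply i).comp continuous_fst).smul ((continuous_apply i).comp continuous_snd)
  have key : convexHull ℝ s =
      (fun p : (Fin d → ℝ) × (Fin d → E) => ∑ i, p.1 i • p.2 i) ''
        ((stdSimplex ℝ (Fin d)) ×ˢ Set.univ.pi fun _ : Fin d => s) := by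
    apply Set.Subset.antisymm
    · intro x hx
      obtain ⟨ι, hfin, z, w, hrange, hai, hpos, hsum1, hsumx⟩ :=
        eq_pos_convex_span_of_mem_convexHull hx
      have hk : Fintype.card ι ≤ d := by
        have h1 := hai.card_le_finrank_succ
        have h2 := Submodule.finrank_le (vectorSpan ℝ (Set.range z))
        omega
      set k := Fintype.card ι with hkdef
      let e := Fintype.equivFin ι
      refine ⟨(fun i : Fin d => if h : (i : ℕ) < k then w (e.symm ⟨i, h⟩) else 0,
               fun i : Fin d => if h : (i : ℕ) < k then z (e.symm ⟨i, h⟩) else a), ⟨⟨?_, ?_⟩, ?_⟩, ?_⟩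
      · intro i
        dsimp only
        split_ifs with h
        · exact (hpos _).le
        · exact le_rfl
      · rw [sum_dite_fin hk (fun i => w (e.symm i))]
        rw [← hsum1]
        exact Fintype.sum_equiv e.symm _ _ fun i => rfl
      · intro i _
        dsimp only
        split_ifs with h
        · exact hrange ⟨_, rfl⟩
        · exact ha
      · dsimp only
        have : ∀ i : Fin d,
            (if h : (i : ℕ) < k then w (e.symm ⟨i, h⟩) else 0) •
              (if h : (i : ℕ) < k then z (e.symm ⟨i, h⟩) else a)
            = if h : (i : ℕ) < k then w (e.symm ⟨i, h⟩) • z (e.symm ⟨i, h⟩) else 0 := by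
          intro i; split_ifs with h <;> simp
        rw [Finset.sum_congr rfl fun i _ => this i,
          sum_dite_fin hk (fun i => w (e.symm i) • z (e.symm i)), ← hsumx]
        exact Fintype.sum_equiv e.symm _ _ fun i => rfl
    · rintro x ⟨⟨ww, zz⟩, ⟨⟨hw0, hw1⟩, hz⟩, rfl⟩
      dsimp only at *
      rw [← Finset.univ.centerMass_eq_of_sum_1 zz hw1]
      exact Finset.univ.centerMass_mem_convexHull (fun i _ => hw0 i) (by rw [hw1]; norm_num)
        (fun i _ => hz i (Set.mem_univ i))
  rw [key]
  exact hT.image hg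

/-- Second inclusion in the proof of Theorem 3.2: any point satisfying all Lagrangian
cuts lies in the convexified epigraph. -/
theorem stmt_16 {n m : ℕ} (K : Set ((Fin n → ℝ) × (Fin m → ℝ))) (hKne : K.Nonempty)
    (hKcpt : IsCompact K) (q : Fin m → ℝ) (xb : Fin n → ℝ) (θb : ℝ)
    (hcuts : ∀ (π : Fin n → ℝ) (π₀ : ℝ), 0 ≤ π₀ →
      (∑ i, π i * xb i) + π₀ * θb ≥
        sInf {r : ℝ | ∃ w ∈ K, r = (∑ i, π i * w.1 i) + π₀ * (∑ j, q j * w.2 j)}) :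
    ∃ y : Fin m → ℝ, (xb, y) ∈ convexHull ℝ K ∧ θb ≥ ∑ j, q j * y j := by
  classical
  by_contra hcon
  set C := convexHull ℝ K with hC
  have hCcpt : IsCompact C := isCompact_convexHull_fd hKne hKcpt
  have hCconv : Convex ℝ C := convex_convexHull ℝ K
  -- the linear map (x, y) ↦ (x, q ⬝ y)
  let L : ((Fin n → ℝ) × (Fin m → ℝ)) →ₗ[ℝ] ((Fin n → ℝ) × ℝ) :=
    { toFun := fun p => (p.1, ∑ j, q j * p.2 j)
      map_add' := by
        intro p1 p2
        ext <;> simp [mul_add, Finset.sum_add_distrib]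
      map_smul' := by
        intro c p
        ext <;> simp [Finset.mul_sum, mul_left_comm] }
  have hLcont : Continuous L :=
    continuous_fst.prodMk (continuous_finset_sum _ fun j _ =>
      continuous_const.mul ((continuous_apply j).comp continuous_snd))
  set A : Set ((Fin n → ℝ) × ℝ) := L '' C with hA
  have hAcpt : IsCompact A := hCcpt.image hLcont
  have hAconv : Convex ℝ A := hCconv.linear_image L
  set B : Set ((Fin n → ℝ) × ℝ) := ({0} : Set (Fin n → ℝ)) ×ˢ Set.Ici (0 : ℝ) with hB
  have hBclosed : IsClosed B := isClosed_singleton.prod isClosed_Ici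
  have hBconv : Convex ℝ B := (convex_singleton 0).prod (convex_Ici 0)
  set U : Set ((Fin n → ℝ) × ℝ) := B +ᵥ A with hU
  have hUclosed : IsClosed U := hBclosed.vadd_right_of_isCompact hAcpt
  have hUeq : U = B + A := rfl
  have hUconv : Convex ℝ U := by rw [hUeq]; exact hBconv.add hAconv
  -- membership characterization
  have hUmem : ∀ p : (Fin n → ℝ) × ℝ,
      p ∈ U ↔ ∃ y, (p.1, y) ∈ C ∧ p.2 ≥ ∑ j, q j * y j := by
    intro p
    constructor
    · rintro ⟨b, hb, a, ha, rfl⟩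
      obtain ⟨c, hc, rfl⟩ := ha
      obtain ⟨hb1, hb2⟩ := hb
      refine ⟨c.2, ?_, ?_⟩
      · have : (b +ᵥ L c).1 = c.1 := by
          simp only [Set.mem_singleton_iff] at hb1
          simp [hb1, L]
        show ((b +ᵥ L c).1, c.2) ∈ C; rw [this]; exact hc
      · simp only [Set.mem_singleton_iff] at hb1
        have hb2' : (0:ℝ) ≤ b.2 := hb2
        show (b + L c).2 ≥ _
        simp only [Prod.snd_add]
        have : (L c).2 = ∑ j, q j * c.2 j := rfl
        rw [this]; linarith
    · rintro ⟨y, hy, hθ⟩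
      refine ⟨(0, p.2 - ∑ j, q j * y j), ⟨rfl, by simpa using hθ⟩,
        L (p.1, y), ⟨(p.1, y), hy, rfl⟩, ?_⟩
      show (0, p.2 - ∑ j, q j * y j) + (p.1, ∑ j, q j * y j) = p
      ext <;> simp
  have hnotmem : (xb, θb) ∉ U := fun hmem => hcon ((hUmem _).mp hmem)
  obtain ⟨f, u, hfx, hfU⟩ := geometric_hahn_banach_point_closed hUconv hUclosed hnotmem
  set π : Fin n → ℝ := fun i => f (Pi.single i 1, 0) with hπ
  set π₀ : ℝ := f (0, 1) with hπ₀def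
  have hdecomp : ∀ (x : Fin n → ℝ) (θ : ℝ), f (x, θ) = (∑ i, π i * x i) + π₀ * θ := by
    intro x θ
    have hx : (x, θ) = (∑ i, x i • ((Pi.single i (1:ℝ), (0:ℝ)) : (Fin n → ℝ) × ℝ)) +
        θ • (((0 : Fin n → ℝ), (1:ℝ)) : (Fin n → ℝ) × ℝ) := by
      ext j
      · simp [Prod.fst_sum, Finset.sum_apply, Pi.single_apply, eq_comm]
      · simp [Prod.snd_sum]
    rw [hx, map_add, map_sum, map_smul]
    simp only [smul_eq_mul]
    rw [Finset.sum_congr rfl fun i _ => by rw [map_smul, smul_eq_mul, mul_comm]]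
    simp only [hπ, hπ₀def]
    ring
  have hπ₀ : 0 ≤ π₀ := by
    by_contra hneg
    push_neg at hneg
    obtain ⟨w, hw⟩ := hKne
    set S := ∑ j, q j * w.2 j with hS
    have hmem : ∀ t : ℝ, 0 ≤ t → ((w.1, S + t) : (Fin n → ℝ) × ℝ) ∈ U := by
      intro t ht
      rw [hUmem]
      exact ⟨w.2, by simpa using subset_convexHull ℝ K hw, by simp [hS]; linarith⟩
    have hineq : ∀ t : ℝ, 0 ≤ t → u < (∑ i, π i * w.1 i) + π₀ * (S + t) := by
      intro t ht
      have := hfU _ (hmem t ht)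
      rwa [hdecomp] at this
    set c := (∑ i, π i * w.1 i) + π₀ * S with hc
    have h0 : u < c := by have := hineq 0 le_rfl; linarith [hineq 0 le_rfl]
    have ht : (0:ℝ) ≤ (u - c) / π₀ := by
      have h := div_nonneg (neg_nonneg.2 (by linarith : u - c ≤ 0)) (neg_nonneg.2 hneg.le)
      rwa [neg_div_neg_eq] at h
    have := hineq _ ht
    rw [mul_add, mul_div_cancel₀ _ hneg.ne] at this
    linarith
  have hSne : {r : ℝ | ∃ w ∈ K, r = (∑ i, π i * w.1 i) + π₀ * (∑ j, q j * w.2 j)}.Nonempty := by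
    obtain ⟨w, hw⟩ := hKne
    exact ⟨_, w, hw, rfl⟩
  have hlb : u ≤ sInf {r : ℝ | ∃ w ∈ K, r = (∑ i, π i * w.1 i) + π₀ * (∑ j, q j * w.2 j)} := by
    apply le_csInf hSne
    rintro r ⟨w, hw, rfl⟩
    have hmem : ((w.1, ∑ j, q j * w.2 j) : (Fin n → ℝ) × ℝ) ∈ U := by
      rw [hUmem]
      exact ⟨w.2, by simpa using subset_convexHull ℝ K hw, le_rfl⟩
    have := hfU _ hmem
    rw [hdecomp] at this
    exact this.le
  have hfinal := hcuts π π₀ hπ₀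
  rw [hdecomp] at hfx
  linarith
end
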